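/- arXiv:2205.05035 — 3 statements merged into one kernel-verified Lean document; each statement's English description precedes it below -/
import Mathlib

section
/- Let 𝔳 = {ν_i}_{i∈I} be a totally ordered set in V with no maximal element such that at least one polynomial is not 𝔳-stable. Let Q be a monic polynomial of smallest degree that is not 𝔳-stable, and take γ ∈ Γ ∪ {∞} with γ > ν_i(Q) for every i ∈ I. Then the map μ defined by μ(f_0 + f_1 Q + … + f_r Q^r) = min_{0≤j≤r} {𝔳(f_j) + jγ}, where f_0 + f_1 Q + … + f_r Q^r is the Q-expansion of f, is a valuation on K[x] with μ|_K = ν_0. -/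
open Polynomial

/-- An additive valuation (possibly with nontrivial support) on a commutative
ring `R`, with values in `Γ ∪ {∞}`. -/
structure ValOn (R : Type*) [CommRing R] (Γ : Type*) [AddCommGroup Γ] [LinearOrder Γ] [IsOrderedAddMonoid Γ] where
  v : R → WithTop Γ
  v_zero : v 0 = ⊤
  v_one : v 1 = 0
  v_mul : ∀ a b, v (a * b) = v a + v b
  min_le_v_add : ∀ a b, min (v a) (v b) ≤ v (a + b)

namespace ValOn

variable {R : Type*} [CommRing R] {Γ : Type*} [AddCommGroup Γ] [LinearOrder Γ] [IsOrderedAddMonoid Γ]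

theorem v_neg (w : ValOn R Γ) (a : R) : w.v (-a) = w.v a := by
  have h1 : w.v (-1) + w.v (-1) = 0 := by
    rw [← w.v_mul]; norm_num [w.v_one]
  have h2 : w.v (-1) = 0 := by
    cases hx : w.v (-1) with
    | top => rw [hx] at h1; simp at h1
    | coe x =>
        rw [hx, ← WithTop.coe_add, ← WithTop.coe_zero, WithTop.coe_inj] at h1
        have hx0 : x = 0 := by
          rcases lt_trichotomy x 0 with hc | hc | hc
          · exact absurd h1 (ne_of_lt (add_neg hc hc))
          · exact hc
          · exact absurd h1 (ne_of_gt (add_pos hc hc))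
        rw [hx0, WithTop.coe_zero]
  calc w.v (-a) = w.v (-1 * a) := by rw [neg_one_mul]
  _ = w.v a := by rw [w.v_mul, h2, zero_add]

theorem le_v_sum (w : ValOn R Γ) {α : Type*} {γ : WithTop Γ} (s : Finset α) (h : α → R)
    (H : ∀ t ∈ s, γ ≤ w.v (h t)) : γ ≤ w.v (∑ t ∈ s, h t) := by
  classical
  induction s using Finset.induction_on with
  | empty => simp [w.v_zero]
  | insert _ _ hx ih =>
      rw [Finset.sum_insert hx]
      refine le_trans ?_ (w.min_le_v_add _ _)
      rw [le_min_iff]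
      exact ⟨H _ (Finset.mem_insert_self _ _),
        ih fun t ht => H t (Finset.mem_insert_of_mem ht)⟩

theorem lt_v_sum (w : ValOn R Γ) {α : Type*} {γ : WithTop Γ} (hγ : γ ≠ ⊤) (s : Finset α)
    (h : α → R) (H : ∀ t ∈ s, γ < w.v (h t)) : γ < w.v (∑ t ∈ s, h t) := by
  classical
  induction s using Finset.induction_on with
  | empty => simp [w.v_zero]; exact lt_top_iff_ne_top.mpr hγ
  | insert _ _ hx ih =>
      rw [Finset.sum_insert hx]
      refine lt_of_lt_of_le ?_ (w.min_le_v_add _ _)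
      rw [lt_min_iff]
      exact ⟨H _ (Finset.mem_insert_self _ _),
        ih fun t ht => H t (Finset.mem_insert_of_mem ht)⟩

/-- The subring `⊕_{γ ∈ Γ} P_γ` of the monoid algebra `R[Γ]`, where
`P_γ = {f : γ ≤ v f}`.  The graded ring `G_v = ⊕_γ P_γ/P_γ⁺` is realized below as the
quotient of this subring by the ideal `⊕_γ P_γ⁺`. -/
def gradedCarrier (w : ValOn R Γ) : Subring (AddMonoidAlgebra R Γ) where
  carrier := {s | ∀ γ : Γ, (γ : WithTop Γ) ≤ w.v (s.coeff γ)}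
  zero_mem' := by intro γ; simp [w.v_zero]
  one_mem' := by
    intro γ
    classical
    show (γ : WithTop Γ) ≤ w.v ((AddMonoidAlgebra.single (0:Γ) (1:R)).coeff γ)
    rw [AddMonoidAlgebra.coeff_single, Finsupp.single_apply]
    split_ifs with h
    · subst h; simp [w.v_one]
    · simp [w.v_zero]
  add_mem' := by
    intro a b ha hb γ
    refine le_trans ?_ (w.min_le_v_add _ _)
    exact le_min (ha γ) (hb γ)
  neg_mem' := by
    intro a ha γ
    show (γ : WithTop Γ) ≤ w.v ((-a).coeff γ)
    rw [AddMonoidAlgebra.coeff_neg, Finsupp.neg_apply, w.v_neg]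
    exact ha γ
  mul_mem' := by
    classical
    intro a b ha hb γ
    rw [AddMonoidAlgebra.coeff_mul]
    rw [Finsupp.sum]
    refine w.le_v_sum _ _ (fun α hα => ?_)
    rw [Finsupp.sum]
    refine w.le_v_sum _ _ (fun β hβ => ?_)
    split_ifs with h
    · subst h
      rw [w.v_mul, WithTop.coe_add]
      exact add_le_add (ha α) (hb β)
    · simp [w.v_zero]

/-- The ideal `⊕_{γ ∈ Γ} P_γ⁺` of `gradedCarrier w`. -/
def gradedIdeal (w : ValOn R Γ) : Ideal (gradedCarrier w) where
  carrier := {s | ∀ γ : Γ, (γ : WithTop Γ) < w.v ((s : AddMonoidAlgebra R Γ).coeff γ)}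
  zero_mem' := by intro γ; simp [w.v_zero]
  add_mem' := by
    intro a b ha hb γ
    refine lt_of_lt_of_le ?_ (w.min_le_v_add _ _)
    exact lt_min (ha γ) (hb γ)
  smul_mem' := by
    classical
    intro c x hx γ
    rw [smul_eq_mul]
    show (γ : WithTop Γ) < w.v (((c : AddMonoidAlgebra R Γ) * (x : AddMonoidAlgebra R Γ)).coeff γ)
    rw [AddMonoidAlgebra.coeff_mul, Finsupp.sum]
    refine w.lt_v_sum (WithTop.coe_ne_top) _ _ (fun α hα => ?_)
    rw [Finsupp.sum]
    refine w.lt_v_sum (WithTop.coe_ne_top) _ _ (fun β hβ => ?_)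
    split_ifs with h
    · subst h
      rw [w.v_mul, WithTop.coe_add]
      exact WithTop.add_lt_add_of_le_of_lt WithTop.coe_ne_top (c.2 α) (hx β)
    · simp [w.v_zero]
end ValOn

/-- The graded ring `G_w = ⊕_{γ} P_γ/P_γ⁺` associated to the valuation `w`,
realized as a quotient. -/
abbrev Graded {R : Type*} [CommRing R] {Γ : Type*} [AddCommGroup Γ] [LinearOrder Γ] [IsOrderedAddMonoid Γ]
    (w : ValOn R Γ) : Type _ :=
  (ValOn.gradedCarrier w) ⧸ (ValOn.gradedIdeal w)

namespace ValOn

variable {R : Type*} [CommRing R] {Γ : Type*} [AddCommGroup Γ] [LinearOrder Γ] [IsOrderedAddMonoid Γ]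

/-- `inv_w f`, the initial form (image of `f` in the homogeneous component
`P_{v f}/P_{v f}⁺` of the graded ring), with `inv_w f = 0` when `f ∈ supp w`. -/
noncomputable def initialForm (w : ValOn R Γ) (f : R) : Graded w :=
  if h : w.v f = ⊤ then 0
  else Ideal.Quotient.mk (gradedIdeal w)
    ⟨AddMonoidAlgebra.single ((w.v f).untop h) f, by
      intro γ
      classical
      show (γ : WithTop Γ) ≤ w.v ((AddMonoidAlgebra.single ((w.v f).untop h) f).coeff γ)
      rw [AddMonoidAlgebra.coeff_single, Finsupp.single_apply]
      split_ifs with hh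
      · rw [← hh, WithTop.coe_untop]
      · simp [w.v_zero]⟩

theorem gradedCarrier_mono {w₁ w₂ : ValOn R Γ} (h : ∀ f, w₁.v f ≤ w₂.v f) :
    gradedCarrier w₁ ≤ gradedCarrier w₂ :=
  fun s hs γ => (hs γ).trans (h _)

/-- The homomorphism `φ : G_{w₁} → G_{w₂}` of graded rings, for `w₁ ≤ w₂`:
it sends `inv_{w₁} f` to `inv_{w₂} f` if `w₁ f = w₂ f` and to `0` if `w₁ f < w₂ f`. -/
noncomputable def phi (w₁ w₂ : ValOn R Γ) (h : ∀ f, w₁.v f ≤ w₂.v f) :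
    Graded w₁ →+* Graded w₂ :=
  Ideal.Quotient.lift (gradedIdeal w₁)
    ((Ideal.Quotient.mk (gradedIdeal w₂)).comp (Subring.inclusion (gradedCarrier_mono h)))
    (by
      intro a ha
      rw [RingHom.comp_apply, Ideal.Quotient.eq_zero_iff_mem]
      exact fun γ => lt_of_lt_of_le (ha γ) (h _))

end ValOn


open ValOn

section PolyDefs

variable {K : Type*} [Field K] {Γ : Type*} [AddCommGroup Γ] [LinearOrder Γ] [IsOrderedAddMonoid Γ]

/-- A polynomial `f` is `𝔳`-stable for a family `𝔳 = (ν_i)_{i ∈ I}` if the values `ν_i(f)`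
eventually stabilize. -/
def Stable {I : Type*} [Preorder I] (ν : I → ValOn (Polynomial K) Γ) (f : Polynomial K) : Prop :=
  ∃ i : I, ∀ j : I, i ≤ j → (ν j).v f = (ν i).v f

/-- The truncation `w_q` of `w` at `q`:
`w_q(f) = min_j w(f_j q^j)` where `f = ∑ f_j q^j` is the `q`-expansion of `f`
(for monic non-constant `q`, the `j`-th coefficient of the `q`-expansion is
`(f /ₘ q^j) %ₘ q`, and all the nonzero coefficients occur for `j ≤ natDegree f`). -/
noncomputable def truncVal (w : ValOn (Polynomial K) Γ) (q f : Polynomial K) : WithTop Γ :=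
  (Finset.range (f.natDegree + 1)).inf' Finset.nonempty_range_add_one
    (fun j => w.v (((f /ₘ q ^ j) %ₘ q) * q ^ j))

/-- `δ(f) = max {ν̄(x - a) : a a root of f}` for a polynomial over an algebraically closed
field, with the convention `δ(f) = ⊥ = -∞` when `f` has no roots (e.g. `deg f = 0`). -/
noncomputable def deltaOf {F : Type*} [Field F] (wbar : ValOn (Polynomial F) Γ)
    (f : Polynomial F) : WithBot (WithTop Γ) :=
  (f.roots.map (fun a => ((wbar.v (X - C a) : WithTop Γ) : WithBot (WithTop Γ)))).sup

/-- `δ(f)` of `f ∈ K[x]`, computed via the fixed extension `ν̄` of `ν` to `K̄[x]`. -/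
noncomputable def delta (wbar : ValOn (Polynomial (AlgebraicClosure K)) Γ)
    (f : Polynomial K) : WithBot (WithTop Γ) :=
  deltaOf wbar (f.map (algebraMap K (AlgebraicClosure K)))

/-- `Q` is a key polynomial (of level `δ(Q)`) for the valuation `ν` (with fixed extension
`ν̄` to `K̄[x]`): `Q` is monic and `δ(f) ≥ δ(Q) → deg f ≥ deg Q` for every nonzero `f`. -/
def IsKeyPoly (wbar : ValOn (Polynomial (AlgebraicClosure K)) Γ) (Q : Polynomial K) : Prop :=
  Q.Monic ∧ ∀ f : Polynomial K, f ≠ 0 → delta wbar Q ≤ delta wbar f → Q.degree ≤ f.degree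

/-- `Ψ_n`: the set of key polynomials of degree `n`. -/
def Psi (wbar : ValOn (Polynomial (AlgebraicClosure K)) Γ) (n : ℕ) : Set (Polynomial K) :=
  {Q | IsKeyPoly wbar Q ∧ Q.natDegree = n}

/-- The set `K_n = {f : ν_Q(f) < ν(f) for all Q ∈ Ψ_n}`. -/
def LimitSet (w : ValOn (Polynomial K) Γ) (wbar : ValOn (Polynomial (AlgebraicClosure K)) Γ)
    (n : ℕ) : Set (Polynomial K) :=
  {f | ∀ Q ∈ Psi wbar n, truncVal w Q f < w.v f}

/-- A limit key polynomial for `Ψ_n`: a monic polynomial in `K_n` of least degree. -/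
def IsLimitKeyPoly (w : ValOn (Polynomial K) Γ)
    (wbar : ValOn (Polynomial (AlgebraicClosure K)) Γ) (n : ℕ) (Qn : Polynomial K) : Prop :=
  Qn.Monic ∧ Qn ∈ LimitSet w wbar n ∧ ∀ g ∈ LimitSet w wbar n, Qn.degree ≤ g.degree

/-- `g` is `𝔳`-stable for the family `𝔳 = (ν_Q)_{Q ∈ Ψ_n}`, ordered by `Q ⪯ Q' ↔ ν_Q ≤ ν_{Q'}`. -/
def PsiStable (w : ValOn (Polynomial K) Γ) (wbar : ValOn (Polynomial (AlgebraicClosure K)) Γ)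
    (n : ℕ) (g : Polynomial K) : Prop :=
  ∃ Q ∈ Psi wbar n, ∀ Q' ∈ Psi wbar n,
    (∀ h : Polynomial K, truncVal w Q h ≤ truncVal w Q' h) → truncVal w Q' g = truncVal w Q g

/-- `v` is a Krull valuation: its support is trivial. -/
def IsKrullVal (v : Polynomial K → WithTop Γ) : Prop :=
  ∀ f : Polynomial K, f ≠ 0 → v f ≠ ⊤

/-- The quotient group `v(K[x])/ν₀K` is a torsion group: every value of `v` has a positive
multiple lying in the value group of `ν₀`. -/
def TorsionOverBase (ν₀ : ValOn K Γ) (v : Polynomial K → WithTop Γ) : Prop :=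
  ∀ f : Polynomial K, f ≠ 0 → ∃ m : ℕ, 0 < m ∧ ∃ a : K, a ≠ 0 ∧ m • v f = ν₀.v a

/-- `v` (a valuation on `K[x]` extending `ν₀`) is residue-transcendental: it is Krull and the
residue field extension `K(x)v ∣ Kν₀` is transcendental, i.e. there are `f, g` with
`v f = v g` whose residue `res(f/g)` is transcendental over `Kν₀`: every polynomial over
`Kν₀` (with coefficients `res(c_i)`, not all zero) does not vanish at `res(f/g)`. -/
def ResidueTranscendental (ν₀ : ValOn K Γ) (v : Polynomial K → WithTop Γ) : Prop :=
  IsKrullVal v ∧ ∃ f g : Polynomial K, f ≠ 0 ∧ g ≠ 0 ∧ v f = v g ∧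
    ∀ (n : ℕ) (c : ℕ → K), (∀ i, 0 ≤ ν₀.v (c i)) → (∃ i, i ≤ n ∧ ν₀.v (c i) = 0) →
      v (∑ i ∈ Finset.range (n + 1), Polynomial.C (c i) * f ^ i * g ^ (n - i)) = v (g ^ n)

/-- `v` is value-transcendental: it is not Krull, or `v(K[x])/ν₀K` is not torsion. -/
def ValueTranscendental (ν₀ : ValOn K Γ) (v : Polynomial K → WithTop Γ) : Prop :=
  ¬ IsKrullVal v ∨ ¬ TorsionOverBase ν₀ v

/-- `v` is valuation-transcendental. -/
def ValuationTranscendental (ν₀ : ValOn K Γ) (v : Polynomial K → WithTop Γ) : Prop :=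
  ValueTranscendental ν₀ v ∨ ResidueTranscendental ν₀ v

/-- `v` is valuation-algebraic. -/
def ValuationAlgebraic (ν₀ : ValOn K Γ) (v : Polynomial K → WithTop Γ) : Prop :=
  ¬ ValuationTranscendental ν₀ v

end PolyDefs

namespace LimitAux
set_option linter.unusedSectionVars false

open Finset

theorem _root_.ValOn.v_add_eq_left {R : Type*} [CommRing R] {Γ : Type*} [AddCommGroup Γ] [LinearOrder Γ] [IsOrderedAddMonoid Γ]
    (w : ValOn R Γ) {x y : R} (h : w.v x < w.v y) : w.v (x + y) = w.v x := by
  have hge : w.v x ≤ w.v (x + y) := by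
    have := w.min_le_v_add x y
    rwa [min_eq_left h.le] at this
  refine le_antisymm ?_ hge
  by_contra hc
  push_neg at hc
  have hx : x = (x + y) + (-y) := by ring
  have h3 : min (w.v (x + y)) (w.v (-y)) ≤ w.v x := by
    conv_rhs => rw [hx]
    exact w.min_le_v_add _ _
  rw [w.v_neg] at h3
  exact absurd h3 (not_le.mpr (lt_min hc h))

variable {K : Type*} [Field K] {Γ : Type*} [AddCommGroup Γ] [LinearOrder Γ] [IsOrderedAddMonoid Γ]
  {I : Type*} [LinearOrder I] [Nonempty I]

/-- eventual truth along `I` -/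
def Ev (P : I → Prop) : Prop := ∃ i : I, ∀ j : I, i ≤ j → P j

theorem Ev.mono {P P' : I → Prop} (h : Ev P) (h' : ∀ i, P i → P' i) : Ev P' := by
  obtain ⟨i, hi⟩ := h
  exact ⟨i, fun j hj => h' j (hi j hj)⟩

theorem Ev.and {P P' : I → Prop} (h : Ev P) (h' : Ev P') : Ev (fun i => P i ∧ P' i) := by
  obtain ⟨i, hi⟩ := h
  obtain ⟨i', hi'⟩ := h'
  exact ⟨max i i', fun j hj =>
    ⟨hi j (le_trans (le_max_left _ _) hj), hi' j (le_trans (le_max_right _ _) hj)⟩⟩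

theorem Ev.elim {P : I → Prop} (h : Ev P) : ∃ i, P i := by
  obtain ⟨i, hi⟩ := h
  exact ⟨i, hi i le_rfl⟩

theorem Ev.finsetForall {α : Type*} (s : Finset α) (P : α → I → Prop)
    (h : ∀ a ∈ s, Ev (P a)) : Ev (fun i => ∀ a ∈ s, P a i) := by
  classical
  induction s using Finset.induction_on with
  | empty => exact ⟨Classical.arbitrary I, by simp⟩
  | @insert a s hx ih =>
      have h1 : Ev (P a) := h a (mem_insert_self _ _)
      have h2 := ih (fun b hb => h b (mem_insert_of_mem hb))
      refine (h1.and h2).mono ?_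
      rintro i ⟨ha, hs⟩ b hb
      rcases mem_insert.mp hb with rfl | hb
      · exact ha
      · exact hs b hb

variable {ν : I → ValOn (Polynomial K) Γ} {Q : Polynomial K} {γ : WithTop Γ}

open Classical in
/-- the stable (limit) value of `f` along the family `ν` -/
noncomputable def sval (ν : I → ValOn (Polynomial K) Γ) (f : Polynomial K) : WithTop Γ :=
  if h : Stable ν f then (ν h.choose).v f else ⊤

theorem sval_spec {f : Polynomial K} (hf : Stable ν f) :
    Ev (fun i => (ν i).v f = sval ν f) := by
  rw [sval, dif_pos hf]
  exact ⟨hf.choose, hf.choose_spec⟩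

theorem sval_eq_of_ev {f : Polynomial K} {c : WithTop Γ}
    (h : Ev (fun i => (ν i).v f = c)) : sval ν f = c := by
  obtain ⟨i, hi⟩ := h
  have hst : Stable ν f := ⟨i, fun j hj => by rw [hi j hj, hi i le_rfl]⟩
  obtain ⟨i', hi'⟩ := sval_spec hst
  have e1 := hi (max i i') (le_max_left _ _)
  have e2 := hi' (max i i') (le_max_right _ _)
  rw [← e1, e2]

theorem sval_of_not_stable {f : Polynomial K} (h : ¬ Stable ν f) : sval ν f = ⊤ :=
  dif_neg h

theorem sval_zero : sval ν 0 = ⊤ :=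
  sval_eq_of_ev ⟨Classical.arbitrary I, fun j _ => (ν j).v_zero⟩

theorem sval_one : sval ν (1 : Polynomial K) = 0 :=
  sval_eq_of_ev ⟨Classical.arbitrary I, fun j _ => (ν j).v_one⟩

theorem sval_mul {f g : Polynomial K} (hf : Stable ν f) (hg : Stable ν g) :
    sval ν (f * g) = sval ν f + sval ν g :=
  sval_eq_of_ev (((sval_spec hf).and (sval_spec hg)).mono
    (fun i hi => by rw [(ν i).v_mul, hi.1, hi.2]))

theorem min_sval_le_add {f g : Polynomial K} (hf : Stable ν f) (hg : Stable ν g) :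
    min (sval ν f) (sval ν g) ≤ sval ν (f + g) := by
  by_cases hs : Stable ν (f + g)
  · obtain ⟨i, ⟨h1, h2⟩, h3⟩ := (((sval_spec hf).and (sval_spec hg)).and (sval_spec hs)).elim
    rw [← h1, ← h2, ← h3]
    exact (ν i).min_le_v_add f g
  · rw [sval_of_not_stable hs]
    exact le_top

theorem stable_of_deg_lt (hQmin : ∀ g : Polynomial K, ¬ Stable ν g → Q.degree ≤ g.degree)
    {f : Polynomial K} (h : f.degree < Q.degree) : Stable ν f := by
  by_contra h'
  exact absurd (hQmin f h') (not_le.mpr h)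

theorem Qdeg_pos (ν₀ : ValOn K Γ) (hext : ∀ (i : I) (a : K), (ν i).v (Polynomial.C a) = ν₀.v a)
    (hQns : ¬ Stable ν Q) : 0 < Q.degree := by
  by_contra h
  push_neg at h
  have hQ : Q = Polynomial.C (Q.coeff 0) := Polynomial.eq_C_of_degree_le_zero h
  exact hQns ⟨Classical.arbitrary I, fun j _ => by rw [hQ, hext j, hext _]⟩

theorem Qcof (hmono : ∀ i j : I, i ≤ j → ∀ f : Polynomial K, (ν i).v f ≤ (ν j).v f)
    (hQns : ¬ Stable ν Q) (i : I) : ∃ j, i ≤ j ∧ (ν i).v Q < (ν j).v Q := by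
  rw [Stable] at hQns
  push_neg at hQns
  obtain ⟨j, hj, hne⟩ := hQns i
  exact ⟨j, hj, lt_of_le_of_ne (hmono i j hj Q) (Ne.symm hne)⟩

theorem const_contra (hmono : ∀ i j : I, i ≤ j → ∀ f : Polynomial K, (ν i).v f ≤ (ν j).v f)
    (hQns : ¬ Stable ν Q) {b : Polynomial K} (hbne : sval ν b ≠ ⊤) {d : WithTop Γ}
    (h : Ev (fun i => sval ν b + (ν i).v Q = d)) : False := by
  obtain ⟨i₀, h⟩ := h
  obtain ⟨j, hij, hlt⟩ := Qcof hmono hQns i₀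
  have e1 := h i₀ le_rfl
  have e2 := h j hij
  exact absurd (WithTop.add_left_cancel hbne (e1.trans e2.symm)) (ne_of_lt hlt)

theorem claimB (hmono : ∀ i j : I, i ≤ j → ∀ f : Polynomial K, (ν i).v f ≤ (ν j).v f)
    (hQns : ¬ Stable ν Q)
    (hQmin : ∀ g : Polynomial K, ¬ Stable ν g → Q.degree ≤ g.degree)
    (hγ : ∀ i : I, (ν i).v Q < γ)
    {a b h : Polynomial K} (hda : a.degree < Q.degree) (hdb : b.degree < Q.degree)
    (hhab : h = a + b * Q) {S : WithTop Γ}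
    (hS : Ev (fun i => S ≤ (ν i).v h)) :
    S ≤ sval ν a ∧ S ≤ sval ν b + γ ∧ (S ≠ ⊤ → S < sval ν b + γ) := by
  have hsa := stable_of_deg_lt hQmin hda
  have hsb := stable_of_deg_lt hQmin hdb
  have hi : S ≤ sval ν a := by
    by_contra hc
    push_neg at hc
    have hane : sval ν a ≠ ⊤ := ne_top_of_lt hc
    have hev : Ev (fun i => sval ν b + (ν i).v Q = sval ν a) := by
      refine (((sval_spec hsa).and (sval_spec hsb)).and hS).mono ?_
      rintro i ⟨⟨h1, h2⟩, h3⟩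
      have hx : b * Q = -a + h := by rw [hhab]; ring
      have h4 : (ν i).v (b * Q) = (ν i).v (-a) := by
        rw [hx]
        exact (ν i).v_add_eq_left (by rw [(ν i).v_neg, h1]; exact lt_of_lt_of_le hc h3)
      rw [(ν i).v_mul, h2, (ν i).v_neg, h1] at h4
      exact h4
    by_cases hbt : sval ν b = ⊤
    · obtain ⟨i, hi⟩ := hev.elim
      rw [hbt, top_add] at hi
      exact hane hi.symm
    · exact const_contra hmono hQns hbt hev
  by_cases hbt : sval ν b = ⊤
  · refine ⟨hi, by rw [hbt, top_add]; exact le_top, fun hS' => by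
      rw [hbt, top_add]; exact lt_top_iff_ne_top.mpr hS'⟩
  · have hstrict : S < sval ν b + γ := by
      by_contra hc
      push_neg at hc
      refine const_contra hmono hQns hbt (d := sval ν a)
        ((((sval_spec hsa).and (sval_spec hsb)).and hS).mono ?_)
      rintro i ⟨⟨h1, h2⟩, h3⟩
      have hlt : (ν i).v (b * Q) < (ν i).v h := by
        rw [(ν i).v_mul, h2]
        calc sval ν b + (ν i).v Q < sval ν b + γ := WithTop.add_lt_add_left hbt (hγ i)
        _ ≤ S := hc
        _ ≤ (ν i).v h := h3
      have hx : a = -(b * Q) + h := by rw [hhab]; ring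
      have h4 : (ν i).v a = (ν i).v (-(b * Q)) := by
        rw [hx]
        exact (ν i).v_add_eq_left (by rw [(ν i).v_neg]; exact hlt)
      rw [(ν i).v_neg, (ν i).v_mul, h2] at h4
      rw [← h1, h4]
    exact ⟨hi, hstrict.le, fun _ => hstrict⟩

theorem lemA (hmono : ∀ i j : I, i ≤ j → ∀ f : Polynomial K, (ν i).v f ≤ (ν j).v f)
    (hQns : ¬ Stable ν Q)
    (hQmin : ∀ g : Polynomial K, ¬ Stable ν g → Q.degree ≤ g.degree)
    (hγ : ∀ i : I, (ν i).v Q < γ)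
    {a b h : Polynomial K} (hda : a.degree < Q.degree) (hdb : b.degree < Q.degree)
    (hhab : h = a + b * Q) {T : WithTop Γ}
    (hT : Ev (fun i => (ν i).v h = T)) : sval ν a = T := by
  have hS : Ev (fun i => T ≤ (ν i).v h) := hT.mono (fun i e => e.ge)
  obtain ⟨hTa, -, -⟩ := claimB hmono hQns hQmin hγ hda hdb hhab hS
  by_cases hTt : T = ⊤
  · rw [hTt] at hTa ⊢
    exact top_le_iff.mp hTa
  have hsa := stable_of_deg_lt hQmin hda
  have hsb := stable_of_deg_lt hQmin hdb
  have hx : a = h + -(b * Q) := by rw [hhab]; ring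
  by_cases hbt : sval ν b = ⊤
  · refine sval_eq_of_ev (((sval_spec hsb).and hT).mono ?_)
    rintro i ⟨h2, h3⟩
    have : (ν i).v a = (ν i).v h := by
      rw [hx]
      exact (ν i).v_add_eq_left (by
        rw [(ν i).v_neg, (ν i).v_mul, h2, hbt, top_add, h3]
        exact lt_top_iff_ne_top.mpr hTt)
    rw [this, h3]
  · by_cases hc : Ev (fun i => T < sval ν b + (ν i).v Q)
    · refine sval_eq_of_ev ((((sval_spec hsb).and hT).and hc).mono ?_)
      rintro i ⟨⟨h2, h3⟩, h4⟩
      have : (ν i).v a = (ν i).v h := by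
        rw [hx]
        exact (ν i).v_add_eq_left (by
          rw [(ν i).v_neg, (ν i).v_mul, h2, h3]; exact h4)
      rw [this, h3]
    · exfalso
      rw [Ev] at hc
      push_neg at hc
      have hall : ∀ i, sval ν b + (ν i).v Q ≤ T := by
        intro i
        obtain ⟨j, hij, hj⟩ := hc i
        exact le_trans (add_le_add_right (hmono i j hij Q) _) hj
      refine const_contra hmono hQns hbt (d := T)
        ((((sval_spec hsa).and (sval_spec hsb)).and hT).mono ?_)
      rintro i ⟨⟨h1, h2⟩, h3⟩
      refine le_antisymm (hall i) ?_
      by_contra hlt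
      push_neg at hlt
      have hy : h = b * Q + a := by rw [hhab]; ring
      have : (ν i).v h = (ν i).v (b * Q) := by
        rw [hy]
        refine (ν i).v_add_eq_left ?_
        rw [(ν i).v_mul, h2, h1]
        exact lt_of_lt_of_le hlt hTa
      rw [h3, (ν i).v_mul, h2] at this
      exact absurd this.symm (ne_of_lt hlt)

-- ## Expansion machinery

theorem exists_expansion_aux (hQm : Q.Monic) (hQd : 0 < Q.degree) :
    ∀ (n : ℕ) (f : Polynomial K), f.natDegree ≤ n →
      ∃ (r : ℕ) (c : ℕ → Polynomial K), f = ∑ j ∈ range (r + 1), c j * Q ^ j ∧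
        (∀ j, (c j).degree < Q.degree) ∧ (∀ j, r < j → c j = 0) := by
  have hQn : 0 < Q.natDegree := natDegree_pos_iff_degree_pos.mpr hQd
  intro n
  induction n using Nat.strong_induction_on with
  | _ n ih =>
    intro f hf
    by_cases hdeg : f.degree < Q.degree
    · refine ⟨0, fun j => if j = 0 then f else 0, by simp, ?_, ?_⟩
      · intro j
        dsimp only
        split_ifs
        · exact hdeg
        · rw [Polynomial.degree_zero]
          exact lt_of_le_of_lt bot_le hQd
      · intro j hj
        dsimp only
        rw [if_neg (by omega)]
    · push_neg at hdeg
      have hf0 : f ≠ 0 := by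
        intro h0
        rw [h0, Polynomial.degree_zero] at hdeg
        exact not_lt_bot (lt_of_lt_of_le hQd hdeg)
      have hnQf : Q.natDegree ≤ f.natDegree := natDegree_le_natDegree hdeg
      have hb := natDegree_divByMonic f hQm
      have hblt : (f /ₘ Q).natDegree < n := by omega
      obtain ⟨r, c, hsum, hdegc, hpad⟩ := ih (f /ₘ Q).natDegree hblt (f /ₘ Q) le_rfl
      refine ⟨r + 1, fun j => if j = 0 then f %ₘ Q else c (j - 1), ?_, ?_, ?_⟩
      · rw [Finset.sum_range_succ']
        simp only [Nat.succ_ne_zero, if_false, Nat.add_sub_cancel, reduceIte, pow_zero, mul_one]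
        have h1 : ∑ k ∈ range (r + 1), c k * Q ^ (k + 1) = (f /ₘ Q) * Q := by
          rw [hsum, Finset.sum_mul]
          exact Finset.sum_congr rfl (fun k _ => by ring)
        rw [h1]
        conv_lhs => rw [← modByMonic_add_div f Q]
        ring
      · intro j
        dsimp only
        split_ifs
        · exact degree_modByMonic_lt f hQm
        · exact hdegc _
      · intro j hj
        dsimp only
        rw [if_neg (by omega)]
        exact hpad _ (by omega)

theorem exists_expansion (hQm : Q.Monic) (hQd : 0 < Q.degree) (f : Polynomial K) :
    ∃ (r : ℕ) (c : ℕ → Polynomial K), f = ∑ j ∈ range (r + 1), c j * Q ^ j ∧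
      (∀ j, (c j).degree < Q.degree) ∧ (∀ j, r < j → c j = 0) :=
  exists_expansion_aux hQm hQd f.natDegree f le_rfl

theorem expansion_zero (hQm : Q.Monic) (hQd : 0 < Q.degree) :
    ∀ (r : ℕ) (c : ℕ → Polynomial K), (∀ j, (c j).degree < Q.degree) →
      ∑ j ∈ range (r + 1), c j * Q ^ j = 0 → ∀ j < r + 1, c j = 0 := by
  intro r
  induction r with
  | zero =>
      intro c hdeg hsum j hj
      interval_cases j
      simpa using hsum
  | succ r ih =>
      intro c hdeg hsum j hj
      rw [Finset.sum_range_succ'] at hsum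
      have h1 : ∑ k ∈ range (r + 1), c (k + 1) * Q ^ (k + 1)
          = (∑ k ∈ range (r + 1), c (k + 1) * Q ^ k) * Q := by
        rw [Finset.sum_mul]
        exact Finset.sum_congr rfl fun k _ => by ring
      rw [h1, pow_zero, mul_one] at hsum
      set g := ∑ k ∈ range (r + 1), c (k + 1) * Q ^ k with hg
      have hc0 : c 0 = -(g * Q) := by
        have := hsum
        linear_combination this
      have hg0 : g = 0 := by
        by_contra hg0
        have hd : (c 0).degree = (g * Q).degree := by rw [hc0, Polynomial.degree_neg]
        have h2 : Q.degree ≤ (g * Q).degree := by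
          rw [Polynomial.degree_mul]
          calc Q.degree = 0 + Q.degree := (zero_add _).symm
          _ ≤ g.degree + Q.degree := add_le_add_left (Polynomial.zero_le_degree_iff.mpr hg0) _
        have h3 := hdeg 0
        rw [hd] at h3
        exact absurd h3 (not_lt.mpr h2)
      have hczero : c 0 = 0 := by rw [hc0, hg0, zero_mul, neg_zero]
      rcases j with _ | j
      · exact hczero
      · exact ih (fun k => c (k + 1)) (fun k => hdeg _) (by rw [← hg]; exact hg0) j (by omega)

theorem expansion_eq (hQm : Q.Monic) (hQd : 0 < Q.degree) {f : Polynomial K} {r s : ℕ}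
    {c d : ℕ → Polynomial K}
    (hc : f = ∑ j ∈ range (r + 1), c j * Q ^ j) (hdc : ∀ j, (c j).degree < Q.degree)
    (hd : f = ∑ j ∈ range (s + 1), d j * Q ^ j) (hdd : ∀ j, (d j).degree < Q.degree) :
    ∀ j, (if j < r + 1 then c j else 0) = (if j < s + 1 then d j else 0) := by
  set t := max r s with ht
  have hzdeg : (0 : Polynomial K).degree < Q.degree := by
    rw [Polynomial.degree_zero]; exact lt_of_le_of_lt bot_le hQd
  have e1 : ∑ jj ∈ range (t + 1), (if jj < r + 1 then c jj else 0) * Q ^ jj = f := by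
    rw [← Finset.sum_subset (Finset.range_subset_range.mpr (by omega : r + 1 ≤ t + 1))
      (fun x _ hx => by rw [if_neg (by simpa using hx), zero_mul])]
    rw [hc]
    exact Finset.sum_congr rfl fun j hj => by rw [if_pos (mem_range.mp hj)]
  have e2 : ∑ jj ∈ range (t + 1), (if jj < s + 1 then d jj else 0) * Q ^ jj = f := by
    rw [← Finset.sum_subset (Finset.range_subset_range.mpr (by omega : s + 1 ≤ t + 1))
      (fun x _ hx => by rw [if_neg (by simpa using hx), zero_mul])]
    rw [hd]
    exact Finset.sum_congr rfl fun j hj => by rw [if_pos (mem_range.mp hj)]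
  have hsub : ∑ jj ∈ range (t + 1),
      ((if jj < r + 1 then c jj else 0) - (if jj < s + 1 then d jj else 0)) * Q ^ jj = 0 := by
    simp only [sub_mul]
    rw [Finset.sum_sub_distrib, e1, e2, sub_self]
  have hdegsub : ∀ jj, ((if jj < r + 1 then c jj else 0)
      - (if jj < s + 1 then d jj else 0)).degree < Q.degree := by
    intro jj
    refine lt_of_le_of_lt (Polynomial.degree_sub_le _ _) (max_lt ?_ ?_) <;> split_ifs
    · exact hdc jj
    · exact hzdeg
    · exact hdd jj
    · exact hzdeg
  have key := expansion_zero hQm hQd t _ hdegsub hsub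
  intro j
  by_cases hj : j < t + 1
  · exact sub_eq_zero.mp (key j hj)
  · rw [if_neg (by omega), if_neg (by omega)]

theorem pad_inf {F : ℕ → WithTop Γ} {r t : ℕ} (hrt : r ≤ t) (hF : ∀ j, r < j → F j = ⊤) :
    (range (t + 1)).inf F = (range (r + 1)).inf F := by
  refine le_antisymm (Finset.inf_mono (Finset.range_subset_range.mpr (by omega))) (Finset.le_inf ?_)
  intro j hj
  by_cases hjr : j < r + 1
  · exact Finset.inf_le (mem_range.mpr hjr)
  · rw [hF j (by omega)]
    exact le_top

theorem inf_expansion_eq (hQm : Q.Monic) (hQd : 0 < Q.degree) {f : Polynomial K} {r s : ℕ}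
    {c d : ℕ → Polynomial K}
    (hc : f = ∑ j ∈ range (r + 1), c j * Q ^ j) (hdc : ∀ j, (c j).degree < Q.degree)
    (hd : f = ∑ j ∈ range (s + 1), d j * Q ^ j) (hdd : ∀ j, (d j).degree < Q.degree) :
    (range (r + 1)).inf (fun j => sval ν (c j) + j • γ) =
    (range (s + 1)).inf (fun j => sval ν (d j) + j • γ) := by
  have key := expansion_eq hQm hQd hc hdc hd hdd
  have e1 : (range (r + 1)).inf (fun j => sval ν (c j) + j • γ)
      = (range (max r s + 1)).inf (fun j => sval ν (if j < r + 1 then c j else 0) + j • γ) := by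
    rw [pad_inf (le_max_left r s) (fun j hj => by rw [if_neg (by omega), sval_zero, top_add])]
    exact Finset.inf_congr rfl (fun j hj => by rw [if_pos (mem_range.mp hj)]) |>.symm
  have e2 : (range (s + 1)).inf (fun j => sval ν (d j) + j • γ)
      = (range (max r s + 1)).inf (fun j => sval ν (if j < s + 1 then d j else 0) + j • γ) := by
    rw [pad_inf (le_max_right r s) (fun j hj => by rw [if_neg (by omega), sval_zero, top_add])]
    exact Finset.inf_congr rfl (fun j hj => by rw [if_pos (mem_range.mp hj)]) |>.symm
  rw [e1, e2]
  exact Finset.inf_congr rfl (fun j _ => by rw [key j])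

variable (ν γ)

noncomputable def muv (hQm : Q.Monic) (hQd : 0 < Q.degree) (f : Polynomial K) : WithTop Γ :=
  (range ((exists_expansion hQm hQd f).choose + 1)).inf
    (fun j => sval ν ((exists_expansion hQm hQd f).choose_spec.choose j) + j • γ)

theorem muv_spec (hQm : Q.Monic) (hQd : 0 < Q.degree) {f : Polynomial K} {r : ℕ}
    {c : ℕ → Polynomial K}
    (hc : f = ∑ j ∈ range (r + 1), c j * Q ^ j) (hdc : ∀ j, (c j).degree < Q.degree) :
    muv ν γ hQm hQd f = (range (r + 1)).inf (fun j => sval ν (c j) + j • γ) := by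
  obtain ⟨hsum, hdeg, -⟩ := (exists_expansion hQm hQd f).choose_spec.choose_spec
  exact inf_expansion_eq hQm hQd hsum hdeg hc hdc


-- ## small arithmetic helpers

theorem nsmul_ne_top {δ : WithTop Γ} (h : δ ≠ ⊤) : ∀ n : ℕ, n • δ ≠ ⊤
  | 0 => by rw [zero_nsmul]; simp
  | (n + 1) => by
      rw [succ_nsmul]
      exact WithTop.add_ne_top.mpr ⟨nsmul_ne_top h n, h⟩

theorem nsmul_top_of_ne {n : ℕ} (hn : n ≠ 0) : n • (⊤ : WithTop Γ) = ⊤ := by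
  cases n with
  | zero => exact absurd rfl hn
  | succ k => rw [succ_nsmul]; exact add_top _

theorem withbot_add_lt {q x y : WithBot ℕ} (hq : 0 < q) (hx : x < q) (hy : y < q) :
    x + y < q + q := by
  have hqb : q ≠ ⊥ := ne_bot_of_gt hq
  have hqq : (⊥ : WithBot ℕ) < q + q := bot_lt_iff_ne_bot.mpr (WithBot.add_ne_bot.mpr ⟨hqb, hqb⟩)
  cases x with
  | bot => rw [WithBot.bot_add]; exact hqq
  | coe a =>
    cases y with
    | bot => rw [WithBot.add_bot]; exact hqq
    | coe b =>
      cases q with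
      | bot => exact absurd hq not_lt_bot
      | coe n =>
        have ha : a < n := WithBot.coe_lt_coe.mp hx
        have hb : b < n := WithBot.coe_lt_coe.mp hy
        rw [← WithBot.coe_add, ← WithBot.coe_add]
        exact WithBot.coe_lt_coe.mpr (by omega)

theorem decomp (hQm : Q.Monic) (hQd : 0 < Q.degree) {h : Polynomial K}
    (hd : h.degree < Q.degree + Q.degree) :
    ∃ a b : Polynomial K, a.degree < Q.degree ∧ b.degree < Q.degree ∧ h = a + b * Q := by
  refine ⟨h %ₘ Q, h /ₘ Q, degree_modByMonic_lt h hQm, ?_,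
    by rw [mul_comm]; exact (modByMonic_add_div h Q).symm⟩
  by_cases hb0 : h /ₘ Q = 0
  · rw [hb0, Polynomial.degree_zero]
    exact lt_of_le_of_lt bot_le hQd
  · have h1 : h.degree = (h /ₘ Q).degree + Q.degree := by
      conv_lhs => rw [← modByMonic_add_div h Q]
      rw [degree_add_eq_right_of_degree_lt, Polynomial.degree_mul, add_comm]
      rw [Polynomial.degree_mul]
      calc (h %ₘ Q).degree < Q.degree := degree_modByMonic_lt h hQm
      _ = Q.degree + 0 := (add_zero _).symm
      _ ≤ Q.degree + (h /ₘ Q).degree :=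
          add_le_add_right (Polynomial.zero_le_degree_iff.mpr hb0) _
    rw [h1] at hd
    exact (WithBot.add_lt_add_iff_right (ne_bot_of_gt hQd)).mp hd

theorem mul_expansion {f g : Polynomial K} {r s : ℕ} {cf cg : ℕ → Polynomial K}
    (hf : f = ∑ j ∈ range (r + 1), cf j * Q ^ j) (hfp : ∀ j, r < j → cf j = 0)
    (hg : g = ∑ j ∈ range (s + 1), cg j * Q ^ j) (hgp : ∀ j, s < j → cg j = 0) :
    f * g = ∑ m ∈ range (r + s + 1), (∑ j ∈ range (m + 1), cf j * cg (m - j)) * Q ^ m := by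
  have hf' : f = ∑ j ∈ range (r + s + 1), cf j * Q ^ j := by
    rw [hf]
    exact Finset.sum_subset (Finset.range_subset_range.mpr (by omega))
      (fun j _ hj => by rw [hfp j (by simp only [mem_range] at hj; omega), zero_mul])
  have hg' : g = ∑ j ∈ range (r + s + 1), cg j * Q ^ j := by
    rw [hg]
    exact Finset.sum_subset (Finset.range_subset_range.mpr (by omega))
      (fun j _ hj => by rw [hgp j (by simp only [mem_range] at hj; omega), zero_mul])
  calc f * g = ∑ j ∈ range (r + s + 1), ∑ k ∈ range (r + s + 1), cf j * cg k * Q ^ (j + k) := by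
        rw [hf', hg', Finset.sum_mul_sum]
        refine Finset.sum_congr rfl fun j _ => Finset.sum_congr rfl fun k _ => ?_
        rw [pow_add]; ring
  _ = ∑ j ∈ range (r + s + 1), ∑ k ∈ range (r + s + 1 - j), cf j * cg k * Q ^ (j + k) := by
        refine Finset.sum_congr rfl fun j hj => ?_
        refine (Finset.sum_subset (Finset.range_subset_range.mpr (by omega)) fun k hk hk' => ?_).symm
        have hjk : r < j ∨ s < k := by
          simp only [mem_range] at hj hk hk'; omega
        rcases hjk with h | h
        · rw [hfp j h, zero_mul, zero_mul]
        · rw [hgp k h, mul_zero, zero_mul]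
  _ = ∑ m ∈ range (r + s + 1), ∑ k ∈ range (m + 1), cf k * cg (m - k) * Q ^ (k + (m - k)) :=
        (Finset.sum_range_diag_flip (r + s + 1) (fun u v => cf u * cg v * Q ^ (u + v))).symm
  _ = ∑ m ∈ range (r + s + 1), (∑ j ∈ range (m + 1), cf j * cg (m - j)) * Q ^ m := by
        refine Finset.sum_congr rfl fun m hm => ?_
        rw [Finset.sum_mul]
        refine Finset.sum_congr rfl fun j hj => ?_
        rw [Nat.add_sub_cancel' (Nat.lt_succ_iff.mp (mem_range.mp hj))]

theorem muv_zero (hQm : Q.Monic) (hQd : 0 < Q.degree) : muv ν γ hQm hQd 0 = ⊤ := by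
  have hz : (0 : Polynomial K).degree < Q.degree := by
    rw [Polynomial.degree_zero]; exact lt_of_le_of_lt bot_le hQd
  have hsum : (0 : Polynomial K) = ∑ j ∈ range (0 + 1), (fun _ : ℕ => (0 : Polynomial K)) j * Q ^ j := by
    simp
  rw [muv_spec ν γ hQm hQd hsum (fun _ => hz)]
  simp [sval_zero]

theorem muv_one (hQm : Q.Monic) (hQd : 0 < Q.degree) : muv ν γ hQm hQd 1 = 0 := by
  have hd1 : (1 : Polynomial K).degree < Q.degree := by
    rw [Polynomial.degree_one]; exact hQd
  have hsum : (1 : Polynomial K) = ∑ j ∈ range (0 + 1), (fun _ : ℕ => (1 : Polynomial K)) j * Q ^ j := by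
    simp
  rw [muv_spec ν γ hQm hQd hsum (fun _ => hd1)]
  simp [sval_one]

theorem muv_C (ν₀ : ValOn K Γ) (hext : ∀ (i : I) (a : K), (ν i).v (Polynomial.C a) = ν₀.v a)
    (hQm : Q.Monic) (hQd : 0 < Q.degree) (a : K) :
    muv ν γ hQm hQd (Polynomial.C a) = ν₀.v a := by
  have hdC : ∀ j : ℕ, ((fun _ : ℕ => Polynomial.C a) j).degree < Q.degree :=
    fun _ => lt_of_le_of_lt Polynomial.degree_C_le hQd
  have hsum : Polynomial.C a = ∑ j ∈ range (0 + 1), (fun _ : ℕ => Polynomial.C a) j * Q ^ j := by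
    simp
  rw [muv_spec ν γ hQm hQd hsum hdC]
  have hsv : sval ν (Polynomial.C a) = ν₀.v a :=
    sval_eq_of_ev ⟨Classical.arbitrary I, fun j _ => hext j a⟩
  simp [hsv]

theorem muv_min_le_add (hQmin : ∀ g : Polynomial K, ¬ Stable ν g → Q.degree ≤ g.degree)
    (hQm : Q.Monic) (hQd : 0 < Q.degree) (f g : Polynomial K) :
    min (muv ν γ hQm hQd f) (muv ν γ hQm hQd g) ≤ muv ν γ hQm hQd (f + g) := by
  obtain ⟨r, cf, hf, hfd, hfp⟩ := exists_expansion hQm hQd f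
  obtain ⟨s, cg, hg, hgd, hgp⟩ := exists_expansion hQm hQd g
  have hf' : f = ∑ j ∈ range (max r s + 1), cf j * Q ^ j := by
    rw [hf]
    exact Finset.sum_subset (Finset.range_subset_range.mpr (by omega))
      (fun j _ hj => by rw [hfp j (by simp only [mem_range] at hj; omega), zero_mul])
  have hg' : g = ∑ j ∈ range (max r s + 1), cg j * Q ^ j := by
    rw [hg]
    exact Finset.sum_subset (Finset.range_subset_range.mpr (by omega))
      (fun j _ hj => by rw [hgp j (by simp only [mem_range] at hj; omega), zero_mul])
  have hsum : f + g = ∑ j ∈ range (max r s + 1), (cf j + cg j) * Q ^ j := by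
    rw [hf', hg', ← Finset.sum_add_distrib]
    exact Finset.sum_congr rfl fun j _ => by ring
  have hdeg : ∀ j, (cf j + cg j).degree < Q.degree := fun j =>
    lt_of_le_of_lt (Polynomial.degree_add_le _ _) (max_lt (hfd j) (hgd j))
  rw [muv_spec ν γ hQm hQd hsum hdeg]
  refine Finset.le_inf fun j hj => ?_
  have h1 : min (sval ν (cf j)) (sval ν (cg j)) + j • γ ≤ sval ν (cf j + cg j) + j • γ :=
    add_le_add_left
      (min_sval_le_add (stable_of_deg_lt hQmin (hfd j)) (stable_of_deg_lt hQmin (hgd j))) _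
  rw [← min_add_add_right] at h1
  refine le_trans (min_le_min ?_ ?_) h1
  · rw [muv_spec ν γ hQm hQd hf hfd]
    by_cases hjr : j < r + 1
    · exact Finset.inf_le (mem_range.mpr hjr)
    · rw [hfp j (by omega), sval_zero, top_add]; exact le_top
  · rw [muv_spec ν γ hQm hQd hg hgd]
    by_cases hjs : j < s + 1
    · exact Finset.inf_le (mem_range.mpr hjs)
    · rw [hgp j (by omega), sval_zero, top_add]; exact le_top

theorem muv_mul (hmono : ∀ i j : I, i ≤ j → ∀ f : Polynomial K, (ν i).v f ≤ (ν j).v f)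
    (hQns : ¬ Stable ν Q)
    (hQmin : ∀ g : Polynomial K, ¬ Stable ν g → Q.degree ≤ g.degree)
    (hγ : ∀ i : I, (ν i).v Q < γ)
    (hQm : Q.Monic) (hQd : 0 < Q.degree) (f g : Polynomial K) :
    muv ν γ hQm hQd (f * g) = muv ν γ hQm hQd f + muv ν γ hQm hQd g := by
  classical
  have hz : (0 : Polynomial K).degree < Q.degree := by
    rw [Polynomial.degree_zero]; exact lt_of_le_of_lt bot_le hQd
  obtain ⟨r, cf, hf, hfd, hfp⟩ := exists_expansion hQm hQd f
  obtain ⟨s, cg, hg, hgd, hgp⟩ := exists_expansion hQm hQd g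
  set μf := muv ν γ hQm hQd f with hμfdef
  set μg := muv ν γ hQm hQd g with hμgdef
  have hμf : μf = (range (r + 1)).inf (fun j => sval ν (cf j) + j • γ) :=
    muv_spec ν γ hQm hQd hf hfd
  have hμg : μg = (range (s + 1)).inf (fun j => sval ν (cg j) + j • γ) :=
    muv_spec ν γ hQm hQd hg hgd
  set h : ℕ → Polynomial K := fun m => ∑ j ∈ range (m + 1), cf j * cg (m - j) with hh
  have hconv : f * g = ∑ m ∈ range (r + s + 1), h m * Q ^ m := mul_expansion hf hfp hg hgp
  have hdh : ∀ m, (h m).degree < Q.degree + Q.degree := by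
    intro m
    have hQQ : (⊥ : WithBot ℕ) < Q.degree + Q.degree :=
      lt_of_le_of_lt bot_le (lt_of_lt_of_le hQd (le_add_of_nonneg_left hQd.le))
    simp only [hh]
    refine lt_of_le_of_lt (Polynomial.degree_sum_le _ _) ?_
    rw [Finset.sup_lt_iff hQQ]
    intro j hj
    exact lt_of_le_of_lt (Polynomial.degree_mul_le _ _) (withbot_add_lt hQd (hfd j) (hgd _))
  have hdec : ∀ m, ∃ a b : Polynomial K,
      a.degree < Q.degree ∧ b.degree < Q.degree ∧ h m = a + b * Q :=
    fun m => decomp hQm hQd (hdh m)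
  choose A B hA hB hAB using hdec
  set C : ℕ → Polynomial K :=
    fun m => (if m ≤ r + s then A m else 0) + (if m = 0 then 0 else B (m - 1)) with hC
  have hCdeg : ∀ m, (C m).degree < Q.degree := by
    intro m
    simp only [hC]
    refine lt_of_le_of_lt (Polynomial.degree_add_le _ _) (max_lt ?_ ?_) <;>
      split_ifs <;> first | exact hA _ | exact hB _ | exact hz
  have hCsum : f * g = ∑ m ∈ range (r + s + 1 + 1), C m * Q ^ m := by
    rw [hconv]
    have e0 : ∀ m ∈ range (r + s + 1 + 1), C m * Q ^ m =
        (if m ≤ r + s then A m else 0) * Q ^ m + (if m = 0 then 0 else B (m - 1)) * Q ^ m := by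
      intro m _
      simp only [hC]
      ring
    rw [Finset.sum_congr rfl e0, Finset.sum_add_distrib]
    have e1 : ∑ m ∈ range (r + s + 1 + 1), (if m ≤ r + s then A m else 0) * Q ^ m
        = ∑ m ∈ range (r + s + 1), A m * Q ^ m := by
      rw [← Finset.sum_subset (Finset.range_subset_range.mpr (by omega : r + s + 1 ≤ r + s + 1 + 1))
        (fun m _ hm => by
          rw [if_neg (by simp only [mem_range] at hm; omega), zero_mul])]
      exact Finset.sum_congr rfl fun m hm => by
        rw [if_pos (by simp only [mem_range] at hm; omega)]
    have e2 : ∑ m ∈ range (r + s + 1 + 1), (if m = 0 then 0 else B (m - 1)) * Q ^ m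
        = ∑ m ∈ range (r + s + 1), B m * Q ^ (m + 1) := by
      rw [Finset.sum_range_succ']
      have e3 : ∀ k ∈ range (r + s + 1),
          (if k + 1 = 0 then (0 : Polynomial K) else B (k + 1 - 1)) * Q ^ (k + 1)
            = B k * Q ^ (k + 1) := fun k _ => by
        rw [if_neg (Nat.succ_ne_zero k), Nat.add_sub_cancel]
      rw [Finset.sum_congr rfl e3]
      simp
    rw [e1, e2, ← Finset.sum_add_distrib]
    refine Finset.sum_congr rfl fun m _ => ?_
    rw [hAB m]
    ring
  have hμfg : muv ν γ hQm hQd (f * g)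
      = (range (r + s + 1 + 1)).inf (fun m => sval ν (C m) + m • γ) :=
    muv_spec ν γ hQm hQd hCsum hCdeg
  set S : ℕ → WithTop Γ :=
    fun m => (range (m + 1)).inf (fun j => sval ν (cf j) + sval ν (cg (m - j))) with hS
  have H1 : ∀ m j : ℕ, j ≤ m →
      μf + μg ≤ (sval ν (cf j) + sval ν (cg (m - j))) + m • γ := by
    intro m j hjm
    have e1 : μf ≤ sval ν (cf j) + j • γ := by
      by_cases hjr : j < r + 1
      · rw [hμf]; exact Finset.inf_le (mem_range.mpr hjr)
      · rw [hfp j (by omega), sval_zero, top_add]; exact le_top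
    have e2 : μg ≤ sval ν (cg (m - j)) + (m - j) • γ := by
      by_cases hks : m - j < s + 1
      · rw [hμg]; exact Finset.inf_le (mem_range.mpr hks)
      · rw [hgp _ (by omega), sval_zero, top_add]; exact le_top
    calc μf + μg ≤ (sval ν (cf j) + j • γ) + (sval ν (cg (m - j)) + (m - j) • γ) :=
          add_le_add e1 e2
    _ = (sval ν (cf j) + sval ν (cg (m - j))) + (j • γ + (m - j) • γ) := by
          rw [add_add_add_comm]
    _ = (sval ν (cf j) + sval ν (cg (m - j))) + m • γ := by
          rw [← add_nsmul, Nat.add_sub_cancel' hjm]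
  have H2 : ∀ m : ℕ, μf + μg ≤ S m + m • γ := by
    intro m
    obtain ⟨j, hj, hSj⟩ := Finset.exists_mem_eq_inf' nonempty_range_add_one
      (fun j => sval ν (cf j) + sval ν (cg (m - j)))
    have hSm : S m = sval ν (cf j) + sval ν (cg (m - j)) := by
      simp only [hS]
      rw [← Finset.inf'_eq_inf nonempty_range_add_one]
      exact hSj
    rw [hSm]
    exact H1 m j (Nat.lt_succ_iff.mp (mem_range.mp hj))
  have HS : ∀ m : ℕ, Ev (fun i => S m ≤ (ν i).v (h m)) := by
    intro m
    have hev : Ev (fun i => ∀ j ∈ range (m + 1), S m ≤ (ν i).v (cf j * cg (m - j))) := by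
      refine Ev.finsetForall _ _ (fun j hj => ?_)
      refine ((sval_spec (stable_of_deg_lt hQmin (hfd j))).and
        (sval_spec (stable_of_deg_lt hQmin (hgd (m - j))))).mono ?_
      rintro i ⟨e1, e2⟩
      rw [(ν i).v_mul, e1, e2]
      simp only [hS]
      exact Finset.inf_le hj
    exact hev.mono fun i hi => (ν i).le_v_sum _ _ hi
  have CB := fun m => claimB hmono hQns hQmin hγ (hA m) (hB m) (hAB m) (HS m)
  have ineq1 : μf + μg ≤ muv ν γ hQm hQd (f * g) := by
    rw [hμfg]
    refine Finset.le_inf fun m hm => ?_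
    have hxs : Stable ν (if m ≤ r + s then A m else 0) := by
      split_ifs with hc
      · exact stable_of_deg_lt hQmin (hA m)
      · exact stable_of_deg_lt hQmin hz
    have hys : Stable ν (if m = 0 then 0 else B (m - 1)) := by
      split_ifs with hc
      · exact stable_of_deg_lt hQmin hz
      · exact stable_of_deg_lt hQmin (hB (m - 1))
    have hmin : min (sval ν (if m ≤ r + s then A m else 0))
        (sval ν (if m = 0 then 0 else B (m - 1))) + m • γ ≤ sval ν (C m) + m • γ := by
      refine add_le_add_left ?_ _
      simp only [hC]
      exact min_sval_le_add hxs hys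
    rw [← min_add_add_right] at hmin
    refine le_trans (le_min ?_ ?_) hmin
    · split_ifs with hc
      · exact le_trans (H2 m) (add_le_add_left (CB m).1 _)
      · rw [sval_zero, top_add]; exact le_top
    · split_ifs with hc
      · rw [sval_zero, top_add]; exact le_top
      · have hm1 : m - 1 + 1 = m := by omega
        calc μf + μg ≤ S (m - 1) + (m - 1) • γ := H2 (m - 1)
        _ ≤ (sval ν (B (m - 1)) + γ) + (m - 1) • γ := add_le_add_left (CB (m - 1)).2.1 _
        _ = sval ν (B (m - 1)) + m • γ := by
            rw [add_assoc, add_comm γ ((m - 1) • γ), ← succ_nsmul, hm1]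
  by_cases hft : μf = ⊤
  · have htop : μf + μg = ⊤ := by rw [hft, top_add]
    rw [htop]
    exact le_antisymm le_top (htop ▸ ineq1)
  by_cases hgt : μg = ⊤
  · have htop : μf + μg = ⊤ := by rw [hgt, add_top]
    rw [htop]
    exact le_antisymm le_top (htop ▸ ineq1)
  -- attainers of largest index
  set Af := (range (r + 1)).filter (fun j => sval ν (cf j) + j • γ = μf) with hAfdef
  have hAfne : Af.Nonempty := by
    obtain ⟨j, hj, hval⟩ := Finset.exists_mem_eq_inf' nonempty_range_add_one
      (fun j => sval ν (cf j) + j • γ)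
    exact ⟨j, Finset.mem_filter.mpr ⟨hj, by rw [← hval, hμf, Finset.inf'_eq_inf]⟩⟩
  set j₀ := Af.max' hAfne with hj₀def
  obtain ⟨hj₀rng, hj₀val⟩ := Finset.mem_filter.mp (Af.max'_mem hAfne)
  have hj₀r : j₀ ≤ r := Nat.lt_succ_iff.mp (mem_range.mp hj₀rng)
  have hj₀gt : ∀ j, j ≤ r → j₀ < j → μf < sval ν (cf j) + j • γ := by
    intro j hjr hgtj
    refine lt_of_le_of_ne ?_ ?_
    · rw [hμf]; exact Finset.inf_le (mem_range.mpr (by omega))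
    · intro e
      have hmem : j ∈ Af :=
        Finset.mem_filter.mpr ⟨mem_range.mpr (by omega), e.symm⟩
      exact absurd (Finset.le_max' Af j hmem) (not_le.mpr hgtj)
  set Ag := (range (s + 1)).filter (fun j => sval ν (cg j) + j • γ = μg) with hAgdef
  have hAgne : Ag.Nonempty := by
    obtain ⟨j, hj, hval⟩ := Finset.exists_mem_eq_inf' nonempty_range_add_one
      (fun j => sval ν (cg j) + j • γ)
    exact ⟨j, Finset.mem_filter.mpr ⟨hj, by rw [← hval, hμg, Finset.inf'_eq_inf]⟩⟩
  set k₀ := Ag.max' hAgne with hk₀def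
  obtain ⟨hk₀rng, hk₀val⟩ := Finset.mem_filter.mp (Ag.max'_mem hAgne)
  have hk₀s : k₀ ≤ s := Nat.lt_succ_iff.mp (mem_range.mp hk₀rng)
  have hk₀gt : ∀ j, j ≤ s → k₀ < j → μg < sval ν (cg j) + j • γ := by
    intro j hjs hgtj
    refine lt_of_le_of_ne ?_ ?_
    · rw [hμg]; exact Finset.inf_le (mem_range.mpr (by omega))
    · intro e
      have hmem : j ∈ Ag :=
        Finset.mem_filter.mpr ⟨mem_range.mpr (by omega), e.symm⟩
      exact absurd (Finset.le_max' Ag j hmem) (not_le.mpr hgtj)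
  set m₀ := j₀ + k₀ with hm₀def
  set T := sval ν (cf j₀) + sval ν (cg k₀) with hTdef
  have hTm : T + m₀ • γ = μf + μg := by
    rw [hTdef, hm₀def, add_nsmul, ← hj₀val, ← hk₀val, add_add_add_comm]
  have hsum_ne : μf + μg ≠ ⊤ := WithTop.add_ne_top.mpr ⟨hft, hgt⟩
  have hTne : T ≠ ⊤ := fun e => hsum_ne (by rw [← hTm, e, top_add])
  have hγfin : m₀ ≠ 0 → γ ≠ ⊤ := by
    intro hm0 he
    exact hsum_ne (by rw [← hTm, he, nsmul_top_of_ne hm0, add_top])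
  have hother : ∀ j ∈ range (m₀ + 1), j ≠ j₀ →
      T < sval ν (cf j) + sval ν (cg (m₀ - j)) := by
    intro j hj hne
    have hjm : j ≤ m₀ := Nat.lt_succ_iff.mp (mem_range.mp hj)
    have hm0 : m₀ ≠ 0 := by omega
    have hγ' : γ ≠ ⊤ := hγfin hm0
    have hsm : m₀ • γ ≠ ⊤ := nsmul_ne_top hγ' m₀
    rw [← WithTop.add_lt_add_iff_right hsm, hTm]
    rcases lt_or_gt_of_ne hne with hlt | hgt2
    · by_cases hks : m₀ - j ≤ s
      · have e1 : μf ≤ sval ν (cf j) + j • γ := by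
          rw [hμf]; exact Finset.inf_le (mem_range.mpr (by omega))
        have e2 : μg < sval ν (cg (m₀ - j)) + (m₀ - j) • γ := hk₀gt (m₀ - j) hks (by omega)
        calc μf + μg < (sval ν (cf j) + j • γ) + (sval ν (cg (m₀ - j)) + (m₀ - j) • γ) :=
              WithTop.add_lt_add_of_le_of_lt hft e1 e2
        _ = (sval ν (cf j) + sval ν (cg (m₀ - j))) + m₀ • γ := by
              rw [add_add_add_comm, ← add_nsmul, Nat.add_sub_cancel' hjm]
      · rw [hgp (m₀ - j) (by omega), sval_zero, add_top, top_add]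
        exact lt_top_iff_ne_top.mpr hsum_ne
    · by_cases hjr : j ≤ r
      · have e1 : μf < sval ν (cf j) + j • γ := hj₀gt j hjr hgt2
        have e2 : μg ≤ sval ν (cg (m₀ - j)) + (m₀ - j) • γ := by
          rw [hμg]; exact Finset.inf_le (mem_range.mpr (by omega))
        calc μf + μg = μg + μf := add_comm _ _
        _ < (sval ν (cg (m₀ - j)) + (m₀ - j) • γ) + (sval ν (cf j) + j • γ) :=
              WithTop.add_lt_add_of_le_of_lt hgt e2 e1
        _ = (sval ν (cf j) + sval ν (cg (m₀ - j))) + m₀ • γ := by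
              rw [add_add_add_comm, add_comm (sval ν (cg (m₀ - j))) (sval ν (cf j)),
                add_comm ((m₀ - j) • γ) (j • γ), ← add_nsmul, Nat.add_sub_cancel' hjm]
      · rw [hfp j (by omega), sval_zero, top_add, top_add]
        exact lt_top_iff_ne_top.mpr hsum_ne
  have hk₀m : m₀ - j₀ = k₀ := by omega
  have hhm₀ : Ev (fun i => (ν i).v (h m₀) = T) := by
    have hmain : Ev (fun i => (ν i).v (cf j₀ * cg (m₀ - j₀)) = T) := by
      rw [hk₀m]
      refine ((sval_spec (stable_of_deg_lt hQmin (hfd j₀))).and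
        (sval_spec (stable_of_deg_lt hQmin (hgd k₀)))).mono ?_
      rintro i ⟨e1, e2⟩
      rw [(ν i).v_mul, e1, e2, hTdef]
    have hoth : Ev (fun i => ∀ j ∈ (range (m₀ + 1)).erase j₀,
        T < (ν i).v (cf j * cg (m₀ - j))) := by
      refine Ev.finsetForall _ _ fun j hj => ?_
      have hj' := Finset.mem_of_mem_erase hj
      have hne := Finset.ne_of_mem_erase hj
      refine ((sval_spec (stable_of_deg_lt hQmin (hfd j))).and
        (sval_spec (stable_of_deg_lt hQmin (hgd (m₀ - j))))).mono ?_
      rintro i ⟨e1, e2⟩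
      rw [(ν i).v_mul, e1, e2]
      exact hother j hj' hne
    refine (hmain.and hoth).mono ?_
    rintro i ⟨hm, ho⟩
    have hj₀mem' : j₀ ∈ range (m₀ + 1) := mem_range.mpr (by omega)
    have hsplit : h m₀ = cf j₀ * cg (m₀ - j₀)
        + ∑ j ∈ (range (m₀ + 1)).erase j₀, cf j * cg (m₀ - j) :=
      (Finset.add_sum_erase _ _ hj₀mem').symm
    rw [hsplit, (ν i).v_add_eq_left (by rw [hm]; exact (ν i).lt_v_sum hTne _ _ ho)]
    exact hm
  have hAT : sval ν (A m₀) = T := lemA hmono hQns hQmin hγ (hA m₀) (hB m₀) (hAB m₀) hhm₀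
  have hsvC : sval ν (C m₀) = T := by
    by_cases hm0 : m₀ = 0
    · have hCA : C m₀ = A m₀ := by
        simp only [hC]
        rw [if_pos (by omega : m₀ ≤ r + s), if_pos hm0, add_zero]
      rw [hCA, hAT]
    · have hγ' : γ ≠ ⊤ := hγfin hm0
      have hm1 : m₀ - 1 + 1 = m₀ := by omega
      have hSge : T + γ ≤ S (m₀ - 1) := by
        simp only [hS]
        refine Finset.le_inf fun j hj => ?_
        have hjm : j ≤ m₀ - 1 := Nat.lt_succ_iff.mp (mem_range.mp hj)
        have h1 := H1 (m₀ - 1) j hjm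
        rw [← hTm] at h1
        have hsm1 : (m₀ - 1) • γ ≠ ⊤ := nsmul_ne_top hγ' _
        have h2 : (T + γ) + (m₀ - 1) • γ
            ≤ (sval ν (cf j) + sval ν (cg (m₀ - 1 - j))) + (m₀ - 1) • γ := by
          calc (T + γ) + (m₀ - 1) • γ = T + m₀ • γ := by
                rw [add_assoc, add_comm γ _, ← succ_nsmul, hm1]
          _ ≤ _ := h1
        exact (WithTop.add_le_add_iff_right hsm1).mp h2
      have hBgt : T < sval ν (B (m₀ - 1)) := by
        have hCBm := CB (m₀ - 1)
        by_cases hSt : S (m₀ - 1) = ⊤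
        · have h3 : sval ν (B (m₀ - 1)) + γ = ⊤ := top_le_iff.mp (hSt ▸ hCBm.2.1)
          have h4 : sval ν (B (m₀ - 1)) = ⊤ := by
            by_contra h5
            exact (WithTop.add_ne_top.mpr ⟨h5, hγ'⟩) h3
          rw [h4]
          exact lt_top_iff_ne_top.mpr hTne
        · have h3 : T + γ < sval ν (B (m₀ - 1)) + γ :=
            lt_of_le_of_lt hSge (hCBm.2.2 hSt)
          exact (WithTop.add_lt_add_iff_right hγ').mp h3
      have hCm : C m₀ = A m₀ + B (m₀ - 1) := by
        simp only [hC]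
        rw [if_pos (by omega : m₀ ≤ r + s), if_neg hm0]
      refine sval_eq_of_ev ?_
      refine ((sval_spec (stable_of_deg_lt hQmin (hA m₀))).and
        (sval_spec (stable_of_deg_lt hQmin (hB (m₀ - 1))))).mono ?_
      rintro i ⟨e1, e2⟩
      rw [hCm, (ν i).v_add_eq_left (by rw [e1, e2, hAT]; exact hBgt), e1, hAT]
  have hle : muv ν γ hQm hQd (f * g) ≤ μf + μg := by
    rw [hμfg, ← hTm]
    calc (range (r + s + 1 + 1)).inf (fun m => sval ν (C m) + m • γ)
        ≤ sval ν (C m₀) + m₀ • γ := Finset.inf_le (mem_range.mpr (by omega))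
    _ = T + m₀ • γ := by rw [hsvC]
  exact le_antisymm hle ineq1


end LimitAux

/-- In the third case (no maximal element, `Q` monic of smallest degree
not `𝔳`-stable, `γ > ν_i(Q)` for all `i`), the map
`μ(∑ f_j Q^j) = min_j (𝔳(f_j) + jγ)` is a valuation on `K[x]` with `μ|_K = ν₀`.
(Here `𝔳(f_j)`, the stable value of `f_j`, is rendered as `ν_i(f_j)` for all
sufficiently large `i`.) -/
theorem limit_truncation_is_valuation
    {K : Type*} [Field K] {Γ : Type*} [AddCommGroup Γ] [LinearOrder Γ] [IsOrderedAddMonoid Γ]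
    {I : Type*} [LinearOrder I] [Nonempty I]
    (ν₀ : ValOn K Γ) (ν : I → ValOn (Polynomial K) Γ)
    (hext : ∀ (i : I) (a : K), (ν i).v (Polynomial.C a) = ν₀.v a)
    (hmono : ∀ i j : I, i ≤ j → ∀ f : Polynomial K, (ν i).v f ≤ (ν j).v f)
    (hstrict : ∀ i j : I, i < j → ∃ f : Polynomial K, (ν i).v f < (ν j).v f)
    (hnomax : ∀ i : I, ∃ j : I, i < j)
    (Q : Polynomial K) (hQmonic : Q.Monic) (hQns : ¬ Stable ν Q)
    (hQmin : ∀ g : Polynomial K, ¬ Stable ν g → Q.degree ≤ g.degree)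
    (γ : WithTop Γ) (hγ : ∀ i : I, (ν i).v Q < γ) :
    ∃ μ : ValOn (Polynomial K) Γ,
      (∀ a : K, μ.v (Polynomial.C a) = ν₀.v a) ∧
      (∀ (f : Polynomial K) (r : ℕ) (c : ℕ → Polynomial K),
        f = ∑ j ∈ Finset.range (r + 1), c j * Q ^ j →
        (∀ j : ℕ, (c j).degree < Q.degree) →
        ∃ i₀ : I, ∀ i : I, i₀ ≤ i →
          μ.v f = (Finset.range (r + 1)).inf' Finset.nonempty_range_add_one
            (fun j => (ν i).v (c j) + j • γ)) := by
    classical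
  have hQd : 0 < Q.degree := LimitAux.Qdeg_pos ν₀ hext hQns
  refine ⟨⟨LimitAux.muv ν γ hQmonic hQd,
      LimitAux.muv_zero ν γ hQmonic hQd,
      LimitAux.muv_one ν γ hQmonic hQd,
      LimitAux.muv_mul ν γ hmono hQns hQmin hγ hQmonic hQd,
      LimitAux.muv_min_le_add ν γ hQmin hQmonic hQd⟩,
    fun a => LimitAux.muv_C ν γ ν₀ hext hQmonic hQd a, ?_⟩
  intro f r c hc hdeg
  have hμ : LimitAux.muv ν γ hQmonic hQd f
      = (Finset.range (r + 1)).inf (fun j => LimitAux.sval ν (c j) + j • γ) :=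
    LimitAux.muv_spec ν γ hQmonic hQd hc hdeg
  obtain ⟨i₀, hi₀⟩ := LimitAux.Ev.finsetForall (Finset.range (r + 1))
    (fun j i => (ν i).v (c j) = LimitAux.sval ν (c j))
    (fun j _ => LimitAux.sval_spec (LimitAux.stable_of_deg_lt hQmin (hdeg j)))
  refine ⟨i₀, fun i hi => ?_⟩
  show LimitAux.muv ν γ hQmonic hQd f = _
  rw [hμ, Finset.inf'_eq_inf]
  exact (Finset.inf_congr rfl (fun j hj => by rw [hi₀ i hi j hj])).symm
end

section
/- Let 𝔳 = {ν_i}_{i∈I} be a totally ordered set in V with no maximal element such that at least one polynomial is not 𝔳-stable. Let Q be a monic polynomial of smallest degree that is not 𝔳-stable, take γ ∈ Γ ∪ {∞} with γ > ν_i(Q) for every i ∈ I, and let μ be the valuation defined by μ(f_0 + f_1 Q + … + f_r Q^r) = min_{0≤j≤r} {𝔳(f_j) + jγ} on Q-expansions. Then ν_i < μ for every i ∈ I, i.e., ν_i(f) ≤ μ(f) for every f ∈ K[x] and ν_i(Q) < μ(Q) = γ. -/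
open Polynomial

open ValOn

section MyAux

variable {K : Type*} [Field K] {Γ : Type*} [AddCommGroup Γ] [LinearOrder Γ] [IsOrderedAddMonoid Γ]

namespace ValOn

theorem my_v_pow (w : ValOn (Polynomial K) Γ) (q : Polynomial K) (n : ℕ) :
    w.v (q ^ n) = n • w.v q := by
  induction n with
  | zero => simp [w.v_one]
  | succ n ih => rw [pow_succ, w.v_mul, ih, succ_nsmul]

theorem my_exists_two_eq_inf' (w : ValOn (Polynomial K) Γ) {α : Type*} (s : Finset α)
    (hs : s.Nonempty) (t : α → Polynomial K)
    (h : s.inf' hs (fun a => w.v (t a)) < w.v (∑ a ∈ s, t a)) :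
    ∃ a ∈ s, ∃ b ∈ s, a ≠ b ∧ w.v (t a) = s.inf' hs (fun a => w.v (t a)) ∧
      w.v (t b) = s.inf' hs (fun a => w.v (t a)) := by
  classical
  set m := s.inf' hs (fun a => w.v (t a)) with hm
  obtain ⟨a, ha, hma⟩ := Finset.exists_mem_eq_inf' hs (fun a => w.v (t a))
  by_contra hcon
  push_neg at hcon
  have hother : ∀ b ∈ s, b ≠ a → m < w.v (t b) := by
    intro b hb hba
    rcases lt_or_eq_of_le (Finset.inf'_le (fun a => w.v (t a)) hb) with h' | h'
    · exact h'
    · exact absurd h'.symm (hcon a ha b hb (Ne.symm hba) hma.symm)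
  have hmne : m ≠ ⊤ := ne_top_of_lt h
  have hsum : t a = (∑ b ∈ s, t b) + -(∑ b ∈ s.erase a, t b) := by
    rw [← Finset.add_sum_erase s t ha]; ring
  have hgt : m < w.v (t a) := by
    rw [hsum]
    refine lt_of_lt_of_le ?_ (w.min_le_v_add _ _)
    rw [lt_min_iff]
    refine ⟨h, ?_⟩
    rw [w.v_neg]
    exact w.lt_v_sum hmne _ _ (fun b hb =>
      hother b (Finset.mem_of_mem_erase hb) (Finset.ne_of_mem_erase hb))
  exact absurd hma.symm (ne_of_gt hgt)

end ValOn

theorem my_coe_nsmul (x : Γ) (n : ℕ) : ((n • x : Γ) : WithTop Γ) = n • (x : WithTop Γ) := by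
  induction n with
  | zero => simp
  | succ n ih => rw [succ_nsmul, succ_nsmul, WithTop.coe_add, ih]

theorem my_nsmul_inj {n : ℕ} (hn : n ≠ 0) {x y : Γ} (h : n • x = n • y) : x = y := by
  rcases lt_trichotomy x y with hc | hc | hc
  · have h0 : (0 : Γ) < y - x := sub_pos.mpr hc
    have := nsmul_pos h0 hn
    rw [smul_sub, ← h, sub_self] at this
    exact absurd this (lt_irrefl _)
  · exact hc
  · have h0 : (0 : Γ) < x - y := sub_pos.mpr hc
    have := nsmul_pos h0 hn
    rw [smul_sub, h, sub_self] at this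
    exact absurd this (lt_irrefl _)

theorem my_eq_of_two_eqs {a b q q' : WithTop Γ} {j₁ j₂ : ℕ} (hj : j₁ < j₂)
    (hq : q ≠ ⊤) (hq' : q' ≠ ⊤) (hne : a + j₁ • q ≠ ⊤)
    (h1 : a + j₁ • q = b + j₂ • q) (h2 : a + j₁ • q' = b + j₂ • q') : q = q' := by
  have ha : a ≠ ⊤ := fun h => hne (by simp [h])
  have hb : b ≠ ⊤ := by
    intro h; rw [h] at h1; exact hne (h1.trans (by simp))
  lift a to Γ using ha
  lift b to Γ using hb
  lift q to Γ using hq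
  lift q' to Γ using hq'
  rw [← my_coe_nsmul, ← my_coe_nsmul, ← WithTop.coe_add, ← WithTop.coe_add,
    WithTop.coe_inj] at h1 h2
  have e1 : a - b = j₂ • q - j₁ • q := by
    rw [sub_eq_sub_iff_add_eq_add, h1, add_comm]
  have e2 : a - b = j₂ • q' - j₁ • q' := by
    rw [sub_eq_sub_iff_add_eq_add, h2, add_comm]
  have key : (j₂ - j₁) • q = (j₂ - j₁) • q' := by
    rw [sub_nsmul q hj.le, sub_nsmul q' hj.le, ← sub_eq_add_neg, ← sub_eq_add_neg,
      ← e1, ← e2]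
  exact congrArg _ (my_nsmul_inj (by omega) key)

theorem my_exists_q_expansion (Q : Polynomial K) (hQM : Q.Monic)
    (hQd : 0 < Q.natDegree) (f : Polynomial K) :
    ∃ (r : ℕ) (c : ℕ → Polynomial K), f = ∑ j ∈ Finset.range (r + 1), c j * Q ^ j ∧
      ∀ j, (c j).degree < Q.degree := by
  have hQ0 : Q ≠ 0 := hQM.ne_zero
  have hbot : (⊥ : WithBot ℕ) < Q.degree :=
    bot_lt_iff_ne_bot.mpr (by simpa [Polynomial.degree_eq_bot] using hQ0)
  generalize hn : f.natDegree = n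
  induction n using Nat.strong_induction_on generalizing f with
  | _ n ih =>
  by_cases h : f.degree < Q.degree
  · refine ⟨0, fun j => if j = 0 then f else 0, ?_, ?_⟩
    · simp
    · intro j; dsimp only; split_ifs with hj
      · exact h
      · simpa using hbot
  · push_neg at h
    have hf0 : f ≠ 0 := by
      intro h0; rw [h0, Polynomial.degree_zero, le_bot_iff, Polynomial.degree_eq_bot] at h
      exact hQ0 h
    have hdle : Q.natDegree ≤ f.natDegree := Polynomial.natDegree_le_natDegree h
    have hdlt : (f /ₘ Q).natDegree < n := by
      rw [Polynomial.natDegree_divByMonic f hQM]; omega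
    obtain ⟨r, c, hc, hcd⟩ := ih _ hdlt (f /ₘ Q) rfl
    refine ⟨r + 1, fun j => if j = 0 then f %ₘ Q else c (j - 1), ?_, ?_⟩
    · rw [Finset.sum_range_succ']
      simp only [Nat.succ_ne_zero, if_false, if_true, Nat.add_sub_cancel, pow_zero, mul_one,
        if_pos rfl]
      rw [show (∑ k ∈ Finset.range (r + 1), c k * Q ^ (k + 1)) =
          (∑ k ∈ Finset.range (r + 1), c k * Q ^ k) * Q by
        rw [Finset.sum_mul]; exact Finset.sum_congr rfl (fun k _ => by ring)]
      rw [← hc]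
      nth_rewrite 1 [← Polynomial.modByMonic_add_div f Q]
      ring
    · intro j; dsimp only; split_ifs with hj
      · exact Polynomial.degree_modByMonic_lt f hQM
      · exact hcd _

theorem my_key_ineq {I : Type*} [LinearOrder I] [Nonempty I]
    (ν : I → ValOn (Polynomial K) Γ)
    (hmono : ∀ i j : I, i ≤ j → ∀ f : Polynomial K, (ν i).v f ≤ (ν j).v f)
    (Q : Polynomial K) (hQns : ¬ Stable ν Q)
    (γ : WithTop Γ) (hγ : ∀ i : I, (ν i).v Q < γ)
    (f : Polynomial K) (r : ℕ) (c : ℕ → Polynomial K)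
    (hexp : f = ∑ j ∈ Finset.range (r + 1), c j * Q ^ j)
    (I₀ : I) (hI₀ : ∀ j ∈ Finset.range (r + 1), ∀ i : I, I₀ ≤ i →
      (ν i).v (c j) = (ν I₀).v (c j))
    (i : I) (j : ℕ) (hj : j ∈ Finset.range (r + 1)) :
    (ν i).v f ≤ (ν I₀).v (c j) + j • γ := by
  classical
  by_contra hcon
  push_neg at hcon
  set δ := (ν I₀).v (c j) + j • γ with hδ
  have hδtop : δ ≠ ⊤ := ne_top_of_lt hcon
  -- cofinal strict increase of the values of Q
  have hcof : ∀ i' : I, ∃ i'', i' ≤ i'' ∧ (ν i').v Q < (ν i'').v Q := by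
    intro i'
    by_contra hco
    push_neg at hco
    exact hQns ⟨i', fun j' hj' => le_antisymm (hco j' hj') (hmono _ _ hj' Q)⟩
  set v : ℕ → WithTop Γ := fun j' => (ν I₀).v (c j') with hv
  set S : Set (WithTop Γ) := {q | ∃ j₁ j₂ : ℕ, j₁ < j₂ ∧ j₂ ≤ r ∧ q ≠ ⊤ ∧
      v j₁ + j₁ • q ≠ ⊤ ∧ v j₁ + j₁ • q = v j₂ + j₂ • q} with hS
  have hSfin : S.Finite := by
    have hsub : S ⊆ ⋃ p ∈ (Finset.range (r + 1) ×ˢ Finset.range (r + 1) : Finset (ℕ × ℕ)),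
        {q | p.1 < p.2 ∧ q ≠ ⊤ ∧ v p.1 + p.1 • q ≠ ⊤ ∧ v p.1 + p.1 • q = v p.2 + p.2 • q} := by
      rintro q ⟨j₁, j₂, h12, h2r, hqt, hnt, heq⟩
      refine Set.mem_biUnion (show ((j₁, j₂) : ℕ × ℕ) ∈ _ from ?_) ⟨h12, hqt, hnt, heq⟩
      refine Finset.mem_coe.mpr (Finset.mem_product.mpr ⟨?_, ?_⟩) <;>
        · rw [Finset.mem_range]; omega
    refine Set.Finite.subset (Set.Finite.biUnion (Finset.range (r+1) ×ˢ Finset.range (r+1)).finite_toSet ?_) hsub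
    rintro ⟨j₁, j₂⟩ -
    apply Set.Subsingleton.finite
    rintro q ⟨h12, hq, hnt, he⟩ q' ⟨_, hq', hnt', he'⟩
    exact my_eq_of_two_eqs h12 hq hq' hnt he he'
  -- every value of Q at a large index lies in S
  have hmem : ∀ i' : I, max i I₀ ≤ i' → (ν i').v Q ∈ S := by
    intro i' hi'
    have hiI : I₀ ≤ i' := le_trans (le_max_right _ _) hi'
    have hii : i ≤ i' := le_trans (le_max_left _ _) hi'
    have hqt : (ν i').v Q ≠ ⊤ := ne_top_of_lt (lt_of_lt_of_le (hγ i') le_top)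
    have hterm : ∀ j' ∈ Finset.range (r + 1),
        (ν i').v (c j' * Q ^ j') = v j' + j' • (ν i').v Q := by
      intro j' hj'
      rw [(ν i').v_mul, (ν i').my_v_pow, hI₀ j' hj' i' hiI]
    set m := (Finset.range (r + 1)).inf' Finset.nonempty_range_add_one
      (fun j' => (ν i').v (c j' * Q ^ j')) with hm
    have hmf : m ≤ (ν i').v f := by
      rw [hexp]
      exact (ν i').le_v_sum _ _ (fun t ht => Finset.inf'_le _ ht)
    have hmδ : m ≤ δ := by
      refine le_trans (Finset.inf'_le _ hj) ?_
      rw [hterm j hj]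
      exact add_le_add le_rfl (nsmul_le_nsmul_right (le_of_lt (hγ i')) j)
    have hlt' : m < (ν i').v f :=
      lt_of_le_of_lt hmδ (lt_of_lt_of_le hcon (hmono i i' hii f))
    have hmtop : m ≠ ⊤ := ne_top_of_lt hlt'
    obtain ⟨a, ha, b, hb, hab, hva, hvb⟩ :=
      (ν i').my_exists_two_eq_inf' (Finset.range (r + 1)) Finset.nonempty_range_add_one
        (fun j' => c j' * Q ^ j') (by rw [← hexp] at *; exact hlt')
    have hbr : b ≤ r := by simpa [Nat.lt_succ_iff] using Finset.mem_range.mp hb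
    have har : a ≤ r := by simpa [Nat.lt_succ_iff] using Finset.mem_range.mp ha
    rw [hterm a ha] at hva
    rw [hterm b hb] at hvb
    rcases lt_or_gt_of_ne hab with hlt2 | hlt2
    · exact ⟨a, b, hlt2, hbr, hqt, by rw [hva]; exact hmtop, by rw [hva, hvb]⟩
    · exact ⟨b, a, hlt2, har, hqt, by rw [hvb]; exact hmtop, by rw [hva, hvb]⟩
  -- the set of values is finite, so it has a maximum, contradicting cofinal increase
  set T : Set (WithTop Γ) := (fun i' => (ν i').v Q) '' {i' | max i I₀ ≤ i'} with hT
  have hTfin : T.Finite := hSfin.subset (by rintro _ ⟨i', hi', rfl⟩; exact hmem i' hi')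
  have hTne : T.Nonempty := ⟨_, ⟨max i I₀, le_refl _, rfl⟩⟩
  obtain ⟨qm, hqmT, hmax⟩ := Set.Finite.exists_maximalFor id T hTfin hTne
  obtain ⟨i₁, hi₁, rfl⟩ := hqmT
  obtain ⟨i₂, hi₂, hlt2⟩ := hcof i₁
  have hmem2 : (ν i₂).v Q ∈ T := ⟨i₂, le_trans hi₁ hi₂, rfl⟩
  exact absurd (hmax hmem2 (le_of_lt hlt2)) (not_le.mpr hlt2)

end MyAux

/-- With `μ` as in the previous statement, `ν_i < μ` for every `i`:
`ν_i(f) ≤ μ(f)` for all `f`, and `ν_i(Q) < μ(Q) = γ`. -/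
theorem limit_valuation_dominates
    {K : Type*} [Field K] {Γ : Type*} [AddCommGroup Γ] [LinearOrder Γ] [IsOrderedAddMonoid Γ]
    {I : Type*} [LinearOrder I] [Nonempty I]
    (ν₀ : ValOn K Γ) (ν : I → ValOn (Polynomial K) Γ)
    (hext : ∀ (i : I) (a : K), (ν i).v (Polynomial.C a) = ν₀.v a)
    (hmono : ∀ i j : I, i ≤ j → ∀ f : Polynomial K, (ν i).v f ≤ (ν j).v f)
    (hstrict : ∀ i j : I, i < j → ∃ f : Polynomial K, (ν i).v f < (ν j).v f)
    (hnomax : ∀ i : I, ∃ j : I, i < j)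
    (Q : Polynomial K) (hQmonic : Q.Monic) (hQns : ¬ Stable ν Q)
    (hQmin : ∀ g : Polynomial K, ¬ Stable ν g → Q.degree ≤ g.degree)
    (γ : WithTop Γ) (hγ : ∀ i : I, (ν i).v Q < γ)
    (μ : ValOn (Polynomial K) Γ)
    (hμext : ∀ a : K, μ.v (Polynomial.C a) = ν₀.v a)
    (hμ : ∀ (f : Polynomial K) (r : ℕ) (c : ℕ → Polynomial K),
      f = ∑ j ∈ Finset.range (r + 1), c j * Q ^ j →
      (∀ j : ℕ, (c j).degree < Q.degree) →
      ∃ i₀ : I, ∀ i : I, i₀ ≤ i →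
        μ.v f = (Finset.range (r + 1)).inf' Finset.nonempty_range_add_one
          (fun j => (ν i).v (c j) + j • γ)) :
    (∀ (i : I) (f : Polynomial K), (ν i).v f ≤ μ.v f) ∧
    (∀ i : I, (ν i).v Q < μ.v Q) ∧ μ.v Q = γ := by
  classical
  have hQ0 : Q ≠ 0 := hQmonic.ne_zero
  have hQdeg : 0 < Q.natDegree := by
    rcases Nat.eq_zero_or_pos Q.natDegree with h0 | h
    · exfalso
      obtain ⟨a, ha⟩ := Polynomial.natDegree_eq_zero.mp h0
      exact hQns ⟨Classical.arbitrary I, fun j hj => by rw [← ha, hext, hext]⟩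
    · exact h
  have hstab : ∀ g : Polynomial K, g.degree < Q.degree →
      ∃ i₀ : I, ∀ i : I, i₀ ≤ i → (ν i).v g = (ν i₀).v g := by
    intro g hg
    by_contra hns
    exact absurd (hQmin g hns) (not_le.mpr hg)
  have part1 : ∀ (i : I) (f : Polynomial K), (ν i).v f ≤ μ.v f := by
    intro i f
    obtain ⟨r, c, hexp, hdeg⟩ := my_exists_q_expansion Q hQmonic hQdeg f
    choose w hw using fun j => hstab (c j) (hdeg j)
    obtain ⟨I₀', hI₀le⟩ := Finset.exists_le ((Finset.range (r + 1)).image w)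
    obtain ⟨i₀, hi₀⟩ := hμ f r c hexp hdeg
    set I₀ : I := max i₀ I₀' with hI₀def
    have hI₀ : ∀ j ∈ Finset.range (r + 1), ∀ i' : I, I₀ ≤ i' →
        (ν i').v (c j) = (ν I₀).v (c j) := by
      intro j hj i' hi'
      have hwj : w j ≤ I₀ :=
        le_trans (hI₀le _ (Finset.mem_image_of_mem w hj)) (le_max_right _ _)
      rw [hw j i' (le_trans hwj hi'), hw j I₀ hwj]
    rw [hi₀ I₀ (le_max_left _ _)]
    refine Finset.le_inf' _ _ (fun j hj => ?_)
    exact my_key_ineq ν hmono Q hQns γ hγ f r c hexp I₀ hI₀ i j hj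
  have hQval : μ.v Q = γ := by
    obtain ⟨i₀, hi₀⟩ := hμ Q 1 (fun j => if j = 1 then 1 else 0)
      (by rw [Finset.sum_range_succ, Finset.sum_range_succ, Finset.sum_range_zero]; simp)
      (by
        intro j
        split_ifs with h
        · rw [Polynomial.degree_one]
          exact Polynomial.natDegree_pos_iff_degree_pos.mp hQdeg
        · rw [Polynomial.degree_zero]
          exact bot_lt_iff_ne_bot.mpr (by simpa [Polynomial.degree_eq_bot] using hQ0))
    rw [hi₀ i₀ le_rfl]
    apply le_antisymm
    · refine le_trans (Finset.inf'_le _ (by simp : (1 : ℕ) ∈ Finset.range 2)) ?_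
      simp [(ν i₀).v_one]
    · refine Finset.le_inf' _ _ (fun j hj => ?_)
      rw [Finset.mem_range] at hj
      interval_cases j
      · simp [(ν i₀).v_zero]
      · simp [(ν i₀).v_one]
  exact ⟨part1, fun i => hQval ▸ hγ i, hQval⟩
end

section
/- Let ν be a valuation on K[x] extending ν_0, let n ∈ ℕ be such that Ψ_n ≠ ∅ and {ν(Q) : Q ∈ Ψ_n} has no maximal element, and let Q_n be a limit key polynomial for Ψ_n. Then 𝔳 = {ν_Q}_{Q∈Ψ_n} is a totally ordered subset of V with no maximal element, Q_n is a polynomial of least degree that is not 𝔳-stable, and taking γ = ν(Q_n), for every f ∈ K[x] with Q_n-expansion f = f_0 + f_1 Q_n + … + f_r Q_n^r one has ν_{Q_n}(f) = min_{0≤j≤r} {𝔳(f_j) + jγ}. -/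
open Polynomial

open ValOn

section KPAux

open ValOn Polynomial Finset

namespace KPAux

variable {Γ : Type*} [AddCommGroup Γ] [LinearOrder Γ] [IsOrderedAddMonoid Γ]

/-! ### Generic `WithTop` and `inf'` helpers -/

theorem nsmul_coe (j : ℕ) (d : Γ) : (j • d : Γ) = (j • (d : WithTop Γ) : WithTop Γ) := by
  induction j with
  | zero => simp
  | succ k ih => rw [succ_nsmul, succ_nsmul, WithTop.coe_add, ih]

theorem nsmul_ne_top (j : ℕ) (d : Γ) : (j • (d : WithTop Γ) : WithTop Γ) ≠ ⊤ := by
  rw [← nsmul_coe]; exact WithTop.coe_ne_top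

theorem add_inf' {α : Type*} {s : Finset α} (hs : s.Nonempty) (f : α → WithTop Γ)
    (c : WithTop Γ) : c + s.inf' hs f = s.inf' hs (fun j => c + f j) := by
  refine le_antisymm (Finset.le_inf' _ _ fun j hj => add_le_add_right (Finset.inf'_le _ hj) c) ?_
  obtain ⟨j₀, hj₀, he⟩ := Finset.exists_mem_eq_inf' hs f
  rw [he]
  exact Finset.inf'_le _ hj₀

theorem inf'_range_pad (F : ℕ → WithTop Γ) {N M : ℕ} (hNM : N ≤ M)
    (hF : ∀ j, N < j → F j = ⊤) :
    (Finset.range (M + 1)).inf' Finset.nonempty_range_add_one F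
      = (Finset.range (N + 1)).inf' Finset.nonempty_range_add_one F := by
  refine le_antisymm (Finset.le_inf' _ _ fun j hj => Finset.inf'_le _ ?_)
    (Finset.le_inf' _ _ fun j hj => ?_)
  · rw [Finset.mem_range] at hj ⊢; omega
  · rcases le_or_gt j N with h | h
    · exact le_trans (Finset.inf'_le _ (Finset.mem_range.2 (by omega))) le_rfl
    · rw [hF j h]; exact le_top

theorem inf'_range_succ (F : ℕ → WithTop Γ) (N : ℕ) :
    (Finset.range (N + 2)).inf' Finset.nonempty_range_add_one F
      = min (F 0) ((Finset.range (N + 1)).inf' Finset.nonempty_range_add_one (fun j => F (j + 1))) := by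
  refine le_antisymm (le_min (Finset.inf'_le _ (Finset.mem_range.2 (by omega)))
    (Finset.le_inf' _ _ fun j hj => Finset.inf'_le _ ?_)) (Finset.le_inf' _ _ fun j hj => ?_)
  · rw [Finset.mem_range] at hj ⊢; omega
  · cases j with
    | zero => exact min_le_left _ _
    | succ k =>
        refine le_trans (min_le_right _ _) (Finset.inf'_le _ ?_)
        rw [Finset.mem_range] at hj ⊢; omega

theorem inf'_range_eq_at (F : ℕ → WithTop Γ) {N k : ℕ} (hk : k ≤ N)
    (hother : ∀ j, j ≤ N → F k ≤ F j) :
    (Finset.range (N + 1)).inf' Finset.nonempty_range_add_one F = F k := by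
  refine le_antisymm (Finset.inf'_le _ (Finset.mem_range.2 (by omega)))
    (Finset.le_inf' _ _ fun j hj => hother j (by have := Finset.mem_range.1 hj; omega))

theorem inf'_range_one (F : ℕ → WithTop Γ) :
    (Finset.range (0 + 1)).inf' Finset.nonempty_range_add_one F = F 0 :=
  inf'_range_eq_at F le_rfl (fun j hj => by cases Nat.le_zero.1 hj; exact le_rfl)

theorem inf'_range_eq_of (F G : ℕ → WithTop Γ) {N M : ℕ}
    (h1 : ∀ j, j ≤ N → j ≤ M → F j = G j)
    (h2 : ∀ j, j ≤ N → M < j → F j = ⊤)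
    (h3 : ∀ j, j ≤ M → N < j → G j = ⊤) :
    (Finset.range (N + 1)).inf' Finset.nonempty_range_add_one F
      = (Finset.range (M + 1)).inf' Finset.nonempty_range_add_one G := by
  refine le_antisymm (Finset.le_inf' _ _ fun j hj => ?_) (Finset.le_inf' _ _ fun j hj => ?_)
  · rw [Finset.mem_range] at hj
    rcases le_or_gt j N with h | h
    · rw [← h1 j h (by omega)]; exact Finset.inf'_le _ (Finset.mem_range.2 (by omega))
    · rw [h3 j (by omega) h]; exact le_top
  · rw [Finset.mem_range] at hj
    rcases le_or_gt j M with h | h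
    · rw [h1 j (by omega) h]; exact Finset.inf'_le _ (Finset.mem_range.2 (by omega))
    · rw [h2 j (by omega) h]; exact le_top

/-! ### `ValOn` arithmetic -/

variable {R : Type*} [CommRing R]

theorem v_sub_ge (w : ValOn R Γ) (a b : R) : min (w.v a) (w.v b) ≤ w.v (a - b) := by
  rw [sub_eq_add_neg]
  simpa [w.v_neg] using w.min_le_v_add a (-b)

theorem v_add_eq_of_lt (w : ValOn R Γ) {a b : R} (h : w.v a < w.v b) :
    w.v (a + b) = w.v a := by
  refine le_antisymm ?_ (by simpa [min_eq_left h.le] using w.min_le_v_add a b)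
  have h2 : min (w.v (a + b)) (w.v b) ≤ w.v a := by simpa using v_sub_ge w (a + b) b
  rcases min_cases (w.v (a + b)) (w.v b) with ⟨he, _⟩ | ⟨he, _⟩
  · rw [he] at h2; exact h2
  · rw [he] at h2; exact absurd h2 (not_le.2 h)

theorem v_sub_eq_of_lt (w : ValOn R Γ) {a b : R} (h : w.v a < w.v b) :
    w.v (a - b) = w.v a := by
  rw [sub_eq_add_neg]
  exact v_add_eq_of_lt w (by rwa [w.v_neg])

theorem v_sub_eq_of_lt' (w : ValOn R Γ) {a b : R} (h : w.v b < w.v a) : w.v (a - b) = w.v b := by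
  rw [show a - b = -(b - a) by ring, w.v_neg]
  exact v_sub_eq_of_lt w h

theorem v_pow (w : ValOn R Γ) (a : R) (j : ℕ) : w.v (a ^ j) = j • w.v a := by
  induction j with
  | zero => simpa using w.v_one
  | succ k ih => rw [pow_succ, w.v_mul, ih, succ_nsmul]

theorem v_multiset_prod {α : Type*} (w : ValOn R Γ) (s : Multiset α) (f : α → R) :
    w.v ((s.map f).prod) = (s.map fun x => w.v (f x)).sum := by
  induction s using Multiset.induction_on with
  | empty => simpa using w.v_one
  | cons a t ih => simp [w.v_mul, ih]

theorem sum_top_of_mem {α : Type*} {s : Multiset α} {f : α → WithTop Γ} {a : α}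
    (ha : a ∈ s) (hfa : f a = ⊤) : (s.map f).sum = ⊤ := by
  classical
  rw [← Multiset.cons_erase ha, Multiset.map_cons, Multiset.sum_cons, hfa, top_add]

theorem sum_lt_sum {α : Type*} {s : Multiset α} {f g : α → WithTop Γ}
    (hfg : ∀ x ∈ s, f x ≤ g x) {b : α} (hb : b ∈ s) (hlt : f b < g b)
    (hne : (s.map f).sum ≠ ⊤) : (s.map f).sum < (s.map g).sum := by
  classical
  have hmem : ∀ x ∈ s.erase b, f x ≤ g x := fun x hx => hfg x (Multiset.mem_of_mem_erase hx)
  have hs : s = b ::ₘ s.erase b := (Multiset.cons_erase hb).symm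
  obtain ⟨t, ht⟩ : ∃ t, s.erase b = t := ⟨_, rfl⟩
  rw [ht] at hmem
  rw [hs, ht] at hne ⊢
  rw [Multiset.map_cons, Multiset.sum_cons] at hne ⊢
  rw [Multiset.map_cons, Multiset.sum_cons]
  have hS : (Multiset.map f t).sum ≠ ⊤ := fun h => hne (by rw [h, add_top])
  calc f b + (Multiset.map f t).sum
      < g b + (Multiset.map f t).sum := WithTop.add_lt_add_right hS hlt
    _ ≤ g b + (Multiset.map g t).sum :=
        add_le_add_right (Multiset.sum_map_le_sum_map _ _ hmem) _

/-! ### Digit lemmas for `truncVal` -/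

variable {K : Type*} [Field K]

theorem divByMonic_mul_monic (p q s : Polynomial K) (hq : q.Monic) (hs : s.Monic) :
    p /ₘ (q * s) = p /ₘ q /ₘ s := by
  refine (Polynomial.div_modByMonic_unique (p /ₘ q /ₘ s) (q * ((p /ₘ q) %ₘ s) + p %ₘ q)
    (hq.mul hs) ⟨?_, ?_⟩).1
  · conv_rhs => rw [← Polynomial.modByMonic_add_div p q,
      ← Polynomial.modByMonic_add_div (p /ₘ q) s]
    ring
  · have h1 : ((p /ₘ q) %ₘ s).degree < s.degree := Polynomial.degree_modByMonic_lt _ hs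
    have h2 : (p %ₘ q).degree < q.degree := Polynomial.degree_modByMonic_lt _ hq
    have hq0 : q.degree ≠ ⊥ := by simp [Polynomial.degree_eq_bot, hq.ne_zero]
    rw [Polynomial.degree_mul]
    refine lt_of_le_of_lt (Polynomial.degree_add_le _ _) (max_lt ?_ ?_)
    · rw [Polynomial.degree_mul]
      exact WithBot.add_lt_add_left hq0 h1
    · refine lt_of_lt_of_le h2 (le_add_of_nonneg_right ?_)
      exact Polynomial.zero_le_degree_iff.2 hs.ne_zero

theorem divByMonic_pow_eq_zero {q : Polynomial K} (hq : q.Monic) (hq1 : 1 ≤ q.natDegree)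
    {f : Polynomial K} {j : ℕ} (hj : f.natDegree < j) : f /ₘ q ^ j = 0 := by
  rw [Polynomial.divByMonic_eq_zero_iff (hq.pow j)]
  calc f.degree ≤ (f.natDegree : WithBot ℕ) := Polynomial.degree_le_natDegree
    _ < ((q ^ j).natDegree : WithBot ℕ) := by
        rw [hq.natDegree_pow]
        exact_mod_cast lt_of_lt_of_le hj (Nat.le_mul_of_pos_right j hq1)
    _ = (q ^ j).degree := (Polynomial.degree_eq_natDegree (hq.pow j).ne_zero).symm

theorem divByMonic_pow_eq_zero' {q : Polynomial K} (hq : q.Monic) {f : Polynomial K}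
    (hf : f.degree < q.degree) {j : ℕ} (hj : 1 ≤ j) : f /ₘ q ^ j = 0 := by
  rw [Polynomial.divByMonic_eq_zero_iff (hq.pow j)]
  refine lt_of_lt_of_le hf ?_
  rw [Polynomial.degree_eq_natDegree hq.ne_zero, Polynomial.degree_eq_natDegree (hq.pow j).ne_zero,
    hq.natDegree_pow]
  exact_mod_cast Nat.le_mul_of_pos_left _ hj

theorem divByMonic_pow_eq_zero2 {q : Polynomial K} (hq : q.Monic) (hq1 : 1 ≤ q.natDegree)
    {f : Polynomial K} (hf : f.natDegree < 2 * q.natDegree) {j : ℕ} (hj : 2 ≤ j) :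
    f /ₘ q ^ j = 0 := by
  rw [Polynomial.divByMonic_eq_zero_iff (hq.pow j)]
  calc f.degree ≤ (f.natDegree : WithBot ℕ) := Polynomial.degree_le_natDegree
    _ < ((q ^ j).natDegree : WithBot ℕ) := by
        rw [hq.natDegree_pow]
        exact_mod_cast lt_of_lt_of_le hf (Nat.mul_le_mul_right _ hj)
    _ = (q ^ j).degree := (Polynomial.degree_eq_natDegree (hq.pow j).ne_zero).symm

theorem truncVal_zero (w : ValOn (Polynomial K) Γ) (q : Polynomial K) : truncVal w q 0 = ⊤ := by
  simp [truncVal, Polynomial.zero_divByMonic, Polynomial.zero_modByMonic, w.v_zero]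

theorem truncVal_one (w : ValOn (Polynomial K) Γ) (f : Polynomial K) :
    truncVal w 1 f = ⊤ := by
  refine le_antisymm le_top (Finset.le_inf' _ _ fun j _ => ?_)
  rw [one_pow, Polynomial.divByMonic_one, Polynomial.modByMonic_one, zero_mul, w.v_zero]

theorem truncVal_pad (w : ValOn (Polynomial K) Γ) {q : Polynomial K} (hq : q.Monic)
    (hq1 : 1 ≤ q.natDegree) (f : Polynomial K) {N : ℕ} (hN : f.natDegree ≤ N) :
    truncVal w q f = (Finset.range (N + 1)).inf' Finset.nonempty_range_add_one
      (fun j => w.v (((f /ₘ q ^ j) %ₘ q) * q ^ j)) := by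
  refine (inf'_range_pad _ hN fun j hj => ?_).symm
  rw [divByMonic_pow_eq_zero hq hq1 hj, Polynomial.zero_modByMonic, zero_mul, w.v_zero]

theorem truncVal_small (w : ValOn (Polynomial K) Γ) {q : Polynomial K} (hq : q.Monic)
    {f : Polynomial K} (hf : f.degree < q.degree) : truncVal w q f = w.v f := by
  unfold truncVal
  rw [inf'_range_eq_at (k := 0) _ (Nat.zero_le _) ?_]
  · rw [pow_zero, Polynomial.divByMonic_one, (Polynomial.modByMonic_eq_self_iff hq).2 hf, mul_one]
  · intro j _
    cases j with
    | zero => exact le_rfl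
    | succ k =>
        rw [divByMonic_pow_eq_zero' hq hf (Nat.succ_le_succ (Nat.zero_le k)),
          Polynomial.zero_modByMonic, zero_mul, w.v_zero]
        exact le_top

theorem truncVal_rec (w : ValOn (Polynomial K) Γ) {q : Polynomial K} (hq : q.Monic)
    (hq1 : 1 ≤ q.natDegree) (f : Polynomial K) :
    truncVal w q f = min (w.v (f %ₘ q)) (w.v q + truncVal w q (f /ₘ q)) := by
  have hg : (f /ₘ q).natDegree ≤ f.natDegree := by
    rw [Polynomial.natDegree_divByMonic f hq]; omega
  rw [truncVal_pad w hq hq1 f (Nat.le_succ _), inf'_range_succ]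
  have h0 : w.v (((f /ₘ q ^ 0) %ₘ q) * q ^ 0) = w.v (f %ₘ q) := by
    rw [pow_zero, Polynomial.divByMonic_one, mul_one]
  have hsh : ∀ j : ℕ, w.v (((f /ₘ q ^ (j + 1)) %ₘ q) * q ^ (j + 1))
      = w.v q + w.v ((((f /ₘ q) /ₘ q ^ j) %ₘ q) * q ^ j) := by
    intro j
    have e1 : f /ₘ q ^ (j + 1) = (f /ₘ q) /ₘ q ^ j := by
      rw [pow_succ', divByMonic_mul_monic f q (q ^ j) hq (hq.pow j)]
    have e2 : ((f /ₘ q ^ (j + 1)) %ₘ q) * q ^ (j + 1)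
        = ((((f /ₘ q) /ₘ q ^ j) %ₘ q) * q ^ j) * q := by
      rw [e1, pow_succ]; ring
    rw [e2, w.v_mul, add_comm]
  rw [h0]
  congr 1
  calc (Finset.range (f.natDegree + 1)).inf' Finset.nonempty_range_add_one
        (fun j => w.v (((f /ₘ q ^ (j + 1)) %ₘ q) * q ^ (j + 1)))
      = (Finset.range (f.natDegree + 1)).inf' Finset.nonempty_range_add_one
        (fun j => w.v q + w.v ((((f /ₘ q) /ₘ q ^ j) %ₘ q) * q ^ j)) := by
        exact Finset.inf'_congr _ rfl (fun j _ => hsh j)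
    _ = w.v q + (Finset.range (f.natDegree + 1)).inf' Finset.nonempty_range_add_one
        (fun j => w.v ((((f /ₘ q) /ₘ q ^ j) %ₘ q) * q ^ j)) := (add_inf' _ _ _).symm
    _ = w.v q + truncVal w q (f /ₘ q) := by rw [← truncVal_pad w hq hq1 (f /ₘ q) hg]

theorem truncVal_le (w : ValOn (Polynomial K) Γ) {q : Polynomial K} (hq : q.Monic)
    (hq1 : 1 ≤ q.natDegree) (f : Polynomial K) : truncVal w q f ≤ w.v f := by
  have H : ∀ (N : ℕ) (f : Polynomial K), f.natDegree ≤ N → truncVal w q f ≤ w.v f := by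
    intro N
    induction N with
    | zero =>
        intro f hf
        have h0 : f.natDegree = 0 := Nat.le_zero.1 hf
        have : f.degree < q.degree := by
          refine lt_of_le_of_lt Polynomial.degree_le_natDegree ?_
          rw [h0, Polynomial.degree_eq_natDegree hq.ne_zero]
          exact_mod_cast hq1
        rw [truncVal_small w hq this]
    | succ N ih =>
        intro f hf
        rcases lt_or_ge f.degree q.degree with h | h
        · rw [truncVal_small w hq h]
        · have hdg : (f /ₘ q).natDegree ≤ N := by
            rw [Polynomial.natDegree_divByMonic f hq]
            have : q.natDegree ≤ f.natDegree := Polynomial.natDegree_le_natDegree h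
            omega
          rw [truncVal_rec w hq hq1 f]
          calc min (w.v (f %ₘ q)) (w.v q + truncVal w q (f /ₘ q))
              ≤ min (w.v (f %ₘ q)) (w.v q + w.v (f /ₘ q)) :=
                min_le_min le_rfl (add_le_add_right (ih _ hdg) _)
            _ = min (w.v (f %ₘ q)) (w.v (q * (f /ₘ q))) := by rw [w.v_mul]
            _ ≤ w.v (f %ₘ q + q * (f /ₘ q)) := w.min_le_v_add _ _
            _ = w.v f := by rw [Polynomial.modByMonic_add_div f q]
  exact H f.natDegree f le_rfl

theorem truncVal_key_pair (w : ValOn (Polynomial K) Γ) {q q' : Polynomial K} (hq : q.Monic)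
    (hq1 : 1 ≤ q.natDegree) (hnd : q'.natDegree = q.natDegree)
    (hsub : (q' - q).degree < q.degree) (hge : w.v q ≤ w.v (q' - q)) :
    truncVal w q q' = w.v q := by
  have hdiv : q' /ₘ q = 1 ∧ q' %ₘ q = q' - q :=
    Polynomial.div_modByMonic_unique 1 (q' - q) hq ⟨by ring, hsub⟩
  have hone : (1 : Polynomial K) %ₘ q = 1 := by
    refine (Polynomial.modByMonic_eq_self_iff hq).2 ?_
    rw [Polynomial.degree_one, Polynomial.degree_eq_natDegree hq.ne_zero]
    exact_mod_cast hq1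
  unfold truncVal
  rw [inf'_range_eq_at (k := 1) _ (by omega : 1 ≤ q'.natDegree) ?_]
  · rw [pow_one, hdiv.1, hone, one_mul]
  · intro j _
    show w.v (((q' /ₘ q ^ 1) %ₘ q) * q ^ 1) ≤ w.v (((q' /ₘ q ^ j) %ₘ q) * q ^ j)
    have h1 : w.v (((q' /ₘ q ^ 1) %ₘ q) * q ^ 1) = w.v q := by
      rw [pow_one, hdiv.1, hone, one_mul]
    rw [h1]
    match j with
    | 0 =>
        rw [pow_zero, Polynomial.divByMonic_one, mul_one, hdiv.2]
        exact hge
    | 1 => rw [h1]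
    | (j + 2) =>
        rw [divByMonic_pow_eq_zero2 hq hq1 (by omega) (by omega : 2 ≤ j + 2),
          Polynomial.zero_modByMonic, zero_mul, w.v_zero]
        exact le_top

theorem truncVal_self (w : ValOn (Polynomial K) Γ) {q : Polynomial K} (hq : q.Monic)
    (hq1 : 1 ≤ q.natDegree) : truncVal w q q = w.v q := by
  have h1 : (q - q).degree < q.degree := by
    rw [sub_self, Polynomial.degree_zero]
    exact bot_lt_iff_ne_bot.2 (by simp [Polynomial.degree_eq_bot, hq.ne_zero])
  have h2 : w.v q ≤ w.v (q - q) := by rw [sub_self, w.v_zero]; exact le_top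
  exact truncVal_key_pair w hq hq1 rfl h1 h2

/-! ### The Gauss valuation attached to a point and a weight -/

section Gauss

variable {F : Type*} [Field F]

theorem vC_ne_top (u : ValOn (Polynomial F) Γ) {c : F} (hc : c ≠ 0) :
    u.v (Polynomial.C c) ≠ ⊤ := by
  intro h
  have h2 : (0 : WithTop Γ) = ⊤ := by
    rw [← u.v_one, ← Polynomial.C_1, ← mul_inv_cancel₀ hc, Polynomial.C_mul, u.v_mul, h, top_add]
  simp at h2

noncomputable def gaussV (u : ValOn (Polynomial F) Γ) (d : Γ) (h : Polynomial F) : WithTop Γ :=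
  (Finset.range (h.natDegree + 1)).inf' Finset.nonempty_range_add_one
    (fun j => u.v (Polynomial.C (h.coeff j)) + ((j • d : Γ) : WithTop Γ))

theorem gaussV_le (u : ValOn (Polynomial F) Γ) (d : Γ) (h : Polynomial F) (j : ℕ) :
    gaussV u d h ≤ u.v (Polynomial.C (h.coeff j)) + ((j • d : Γ) : WithTop Γ) := by
  rcases le_or_gt j h.natDegree with hj | hj
  · exact Finset.inf'_le _ (Finset.mem_range.2 (by omega))
  · rw [Polynomial.coeff_eq_zero_of_natDegree_lt hj, Polynomial.C_0, u.v_zero, top_add]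
    exact le_top

theorem gaussV_pad (u : ValOn (Polynomial F) Γ) (d : Γ) (h : Polynomial F) {N : ℕ}
    (hN : h.natDegree ≤ N) : gaussV u d h = (Finset.range (N + 1)).inf'
      Finset.nonempty_range_add_one
      (fun j => u.v (Polynomial.C (h.coeff j)) + ((j • d : Γ) : WithTop Γ)) := by
  refine (inf'_range_pad _ hN fun j hj => ?_).symm
  rw [Polynomial.coeff_eq_zero_of_natDegree_lt hj, Polynomial.C_0, u.v_zero, top_add]

theorem gaussV_zero (u : ValOn (Polynomial F) Γ) (d : Γ) : gaussV u d 0 = ⊤ := by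
  rw [gaussV_pad u d 0 (le_of_eq Polynomial.natDegree_zero), inf'_range_one]
  simp [u.v_zero, top_add]

theorem gaussV_ne_top (u : ValOn (Polynomial F) Γ) (d : Γ) {h : Polynomial F} (hh : h ≠ 0) :
    gaussV u d h ≠ ⊤ := by
  refine ne_top_of_le_ne_top (WithTop.add_ne_top.2
    ⟨vC_ne_top u (Polynomial.leadingCoeff_ne_zero.2 hh), WithTop.coe_ne_top⟩)
    (gaussV_le u d h h.natDegree)

theorem gaussV_min_le_add (u : ValOn (Polynomial F) Γ) (d : Γ) (h₁ h₂ : Polynomial F) :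
    min (gaussV u d h₁) (gaussV u d h₂) ≤ gaussV u d (h₁ + h₂) := by
  refine Finset.le_inf' _ _ fun j _ => ?_
  calc min (gaussV u d h₁) (gaussV u d h₂)
      ≤ min (u.v (Polynomial.C (h₁.coeff j)) + ((j • d : Γ) : WithTop Γ))
          (u.v (Polynomial.C (h₂.coeff j)) + ((j • d : Γ) : WithTop Γ)) :=
        min_le_min (gaussV_le u d h₁ j) (gaussV_le u d h₂ j)
    _ = min (u.v (Polynomial.C (h₁.coeff j))) (u.v (Polynomial.C (h₂.coeff j)))
          + ((j • d : Γ) : WithTop Γ) := (min_add_add_right _ _ _)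
    _ ≤ u.v (Polynomial.C ((h₁ + h₂).coeff j)) + ((j • d : Γ) : WithTop Γ) := by
        rw [Polynomial.coeff_add, Polynomial.C_add]
        exact add_le_add_left (u.min_le_v_add _ _) _

theorem gaussV_neg (u : ValOn (Polynomial F) Γ) (d : Γ) (h : Polynomial F) :
    gaussV u d (-h) = gaussV u d h := by
  rw [gaussV_pad u d (-h) (le_of_eq (Polynomial.natDegree_neg h)), gaussV_pad u d h le_rfl]
  refine Finset.inf'_congr _ rfl fun j _ => ?_
  rw [Polynomial.coeff_neg, map_neg, u.v_neg]

theorem gaussV_add_eq_of_lt (u : ValOn (Polynomial F) Γ) (d : Γ) {h₁ h₂ : Polynomial F}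
    (hlt : gaussV u d h₁ < gaussV u d h₂) : gaussV u d (h₁ + h₂) = gaussV u d h₁ := by
  refine le_antisymm ?_ (by simpa [min_eq_left hlt.le] using gaussV_min_le_add u d h₁ h₂)
  have h3 : min (gaussV u d (h₁ + h₂)) (gaussV u d h₂) ≤ gaussV u d h₁ := by
    have := gaussV_min_le_add u d (h₁ + h₂) (-h₂)
    rwa [add_neg_cancel_right, gaussV_neg] at this
  rcases min_cases (gaussV u d (h₁ + h₂)) (gaussV u d h₂) with ⟨he, _⟩ | ⟨he, _⟩
  · rwa [he] at h3
  · rw [he] at h3; exact absurd h3 (not_le.2 hlt)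

theorem le_add_coe_iff (a b : WithTop Γ) (c : Γ) :
    a ≤ b + (c : WithTop Γ) ↔ a + ((-c : Γ) : WithTop Γ) ≤ b := by
  constructor
  · intro h
    have := add_le_add_left h ((-c : Γ) : WithTop Γ)
    rwa [add_assoc, ← WithTop.coe_add, add_neg_cancel, WithTop.coe_zero, add_zero] at this
  · intro h
    have := add_le_add_left h ((c : Γ) : WithTop Γ)
    rwa [add_assoc, ← WithTop.coe_add, neg_add_cancel, WithTop.coe_zero, add_zero] at this

theorem gaussV_mul (u : ValOn (Polynomial F) Γ) (d : Γ) (h₁ h₂ : Polynomial F) :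
    gaussV u d (h₁ * h₂) = gaussV u d h₁ + gaussV u d h₂ := by
  classical
  rcases eq_or_ne h₁ 0 with rfl | hh₁
  · rw [zero_mul, gaussV_zero, top_add]
  rcases eq_or_ne h₂ 0 with rfl | hh₂
  · rw [mul_zero, gaussV_zero, add_top]
  set T₁ : ℕ → WithTop Γ := fun i => u.v (Polynomial.C (h₁.coeff i)) + ((i • d : Γ) : WithTop Γ)
    with hT₁
  set T₂ : ℕ → WithTop Γ := fun i => u.v (Polynomial.C (h₂.coeff i)) + ((i • d : Γ) : WithTop Γ)
    with hT₂
  have hT₁ge : ∀ i, gaussV u d h₁ ≤ T₁ i := fun i => gaussV_le u d h₁ i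
  have hT₂ge : ∀ i, gaussV u d h₂ ≤ T₂ i := fun i => gaussV_le u d h₂ i
  have hre : ∀ i j : ℕ, T₁ i + T₂ j
      = u.v (Polynomial.C (h₁.coeff i * h₂.coeff j)) + (((i + j) • d : Γ) : WithTop Γ) := by
    intro i j
    rw [hT₁, hT₂, Polynomial.C_mul, u.v_mul, add_nsmul, WithTop.coe_add]
    exact add_add_add_comm _ _ _ _
  have hex₁ : ∃ i, T₁ i = gaussV u d h₁ := by
    obtain ⟨i, _, he⟩ := Finset.exists_mem_eq_inf' (Finset.nonempty_range_add_one
      (n := h₁.natDegree)) (fun j => u.v (Polynomial.C (h₁.coeff j)) + ((j • d : Γ) : WithTop Γ))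
    exact ⟨i, he.symm⟩
  have hex₂ : ∃ i, T₂ i = gaussV u d h₂ := by
    obtain ⟨i, _, he⟩ := Finset.exists_mem_eq_inf' (Finset.nonempty_range_add_one
      (n := h₂.natDegree)) (fun j => u.v (Polynomial.C (h₂.coeff j)) + ((j • d : Γ) : WithTop Γ))
    exact ⟨i, he.symm⟩
  set i₀ := Nat.find hex₁ with hi₀def
  set j₀ := Nat.find hex₂ with hj₀def
  have hi₀ : T₁ i₀ = gaussV u d h₁ := Nat.find_spec hex₁
  have hj₀ : T₂ j₀ = gaussV u d h₂ := Nat.find_spec hex₂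
  have hi₀min : ∀ i, i < i₀ → T₁ i ≠ gaussV u d h₁ := fun i hi => Nat.find_min hex₁ hi
  have hj₀min : ∀ i, i < j₀ → T₂ i ≠ gaussV u d h₂ := fun i hi => Nat.find_min hex₂ hi
  have hG₁top : gaussV u d h₁ ≠ ⊤ := gaussV_ne_top u d hh₁
  have hG₂top : gaussV u d h₂ ≠ ⊤ := gaussV_ne_top u d hh₂
  have hmain : u.v (Polynomial.C (h₁.coeff i₀ * h₂.coeff j₀)) + (((i₀ + j₀) • d : Γ) : WithTop Γ)
      = gaussV u d h₁ + gaussV u d h₂ := by rw [← hre, hi₀, hj₀]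
  have hmaintop : u.v (Polynomial.C (h₁.coeff i₀ * h₂.coeff j₀)) ≠ ⊤ := by
    intro h
    rw [h, top_add] at hmain
    exact WithTop.add_ne_top.2 ⟨hG₁top, hG₂top⟩ hmain.symm
  have hrest : ∀ p ∈ (Finset.HasAntidiagonal.antidiagonal (i₀ + j₀)).erase (i₀, j₀),
      u.v (Polynomial.C (h₁.coeff i₀ * h₂.coeff j₀))
        < u.v (Polynomial.C (h₁.coeff p.1 * h₂.coeff p.2)) := by
    intro p hp
    have hpne := (Finset.mem_erase.1 hp).1
    have hpsum : p.1 + p.2 = i₀ + j₀ := Finset.HasAntidiagonal.mem_antidiagonal.1 (Finset.mem_erase.1 hp).2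
    have hkey : gaussV u d h₁ + gaussV u d h₂ < T₁ p.1 + T₂ p.2 := by
      rcases Nat.lt_or_ge p.1 i₀ with hlt | hge
      · have h1 : gaussV u d h₁ < T₁ p.1 := lt_of_le_of_ne (hT₁ge _) (Ne.symm (hi₀min _ hlt))
        calc gaussV u d h₁ + gaussV u d h₂ < T₁ p.1 + gaussV u d h₂ :=
              WithTop.add_lt_add_right hG₂top h1
          _ ≤ T₁ p.1 + T₂ p.2 := add_le_add_right (hT₂ge _) _
      · have hne2 : ¬(p.1 = i₀ ∧ p.2 = j₀) := fun ⟨ha, hb⟩ => hpne (Prod.ext ha hb)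
        have hlt2 : p.2 < j₀ := by omega
        have h2 : gaussV u d h₂ < T₂ p.2 := lt_of_le_of_ne (hT₂ge _) (Ne.symm (hj₀min _ hlt2))
        exact WithTop.add_lt_add_of_le_of_lt hG₁top (hT₁ge _) h2
    have hcan : u.v (Polynomial.C (h₁.coeff i₀ * h₂.coeff j₀)) + (((i₀ + j₀) • d : Γ) : WithTop Γ)
        < u.v (Polynomial.C (h₁.coeff p.1 * h₂.coeff p.2))
          + (((i₀ + j₀) • d : Γ) : WithTop Γ) := by
      rw [hmain]
      refine lt_of_lt_of_le hkey (le_of_eq ?_)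
      rw [hre, hpsum]
    exact (WithTop.add_lt_add_iff_right WithTop.coe_ne_top).1 hcan
  have hmem : (i₀, j₀) ∈ Finset.HasAntidiagonal.antidiagonal (i₀ + j₀) := Finset.HasAntidiagonal.mem_antidiagonal.2 rfl
  have hcoeffval : u.v (Polynomial.C ((h₁ * h₂).coeff (i₀ + j₀)))
      = u.v (Polynomial.C (h₁.coeff i₀ * h₂.coeff j₀)) := by
    rw [Polynomial.coeff_mul, ← Finset.add_sum_erase _ _ hmem, map_add, map_sum]
    exact v_add_eq_of_lt u (u.lt_v_sum hmaintop _ _ (fun p hp => hrest p hp))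
  refine le_antisymm ?_ ?_
  · refine le_trans (gaussV_le u d _ (i₀ + j₀)) ?_
    rw [hcoeffval, hmain]
  · refine Finset.le_inf' _ _ fun k _ => ?_
    rw [Polynomial.coeff_mul, map_sum, le_add_coe_iff]
    refine u.le_v_sum _ _ fun p hp => ?_
    rw [← le_add_coe_iff]
    have hpk : p.1 + p.2 = k := Finset.HasAntidiagonal.mem_antidiagonal.1 hp
    calc gaussV u d h₁ + gaussV u d h₂ ≤ T₁ p.1 + T₂ p.2 := add_le_add (hT₁ge _) (hT₂ge _)
      _ = u.v (Polynomial.C (h₁.coeff p.1 * h₂.coeff p.2)) + ((k • d : Γ) : WithTop Γ) := by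
          rw [hre, hpk]

theorem gaussV_C (u : ValOn (Polynomial F) Γ) (d : Γ) (c : F) :
    gaussV u d (Polynomial.C c) = u.v (Polynomial.C c) := by
  simp [gaussV, Polynomial.coeff_C]

theorem gaussV_X_add_C (u : ValOn (Polynomial F) Γ) (d : Γ) (e : F) :
    gaussV u d (Polynomial.X + Polynomial.C e)
      = min (u.v (Polynomial.C e)) ((d : WithTop Γ)) := by
  have hnd : (Polynomial.X + Polynomial.C e).natDegree ≤ 1 :=
    le_of_eq (Polynomial.natDegree_X_add_C e)
  rw [gaussV_pad u d _ hnd, inf'_range_succ]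
  congr 1
  · simp
  · rw [inf'_range_one]
    simp [u.v_one, one_nsmul]

end Gauss

/-! ### The minimal-pair valuation `nuHat` -/

section NuHat

variable {F : Type*} [Field F]

noncomputable def nuHat (u : ValOn (Polynomial F) Γ) (a : F) (d : Γ) (h : Polynomial F) :
    WithTop Γ :=
  gaussV u d (Polynomial.taylor a h)

theorem nuHat_mul (u : ValOn (Polynomial F) Γ) (a : F) (d : Γ) (h₁ h₂ : Polynomial F) :
    nuHat u a d (h₁ * h₂) = nuHat u a d h₁ + nuHat u a d h₂ := by
  unfold nuHat
  rw [Polynomial.taylor_mul, gaussV_mul]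

theorem nuHat_min_le_add (u : ValOn (Polynomial F) Γ) (a : F) (d : Γ) (h₁ h₂ : Polynomial F) :
    min (nuHat u a d h₁) (nuHat u a d h₂) ≤ nuHat u a d (h₁ + h₂) := by
  unfold nuHat
  rw [map_add]
  exact gaussV_min_le_add u d _ _

theorem nuHat_add_eq_of_lt (u : ValOn (Polynomial F) Γ) (a : F) (d : Γ) {h₁ h₂ : Polynomial F}
    (hlt : nuHat u a d h₁ < nuHat u a d h₂) : nuHat u a d (h₁ + h₂) = nuHat u a d h₁ := by
  unfold nuHat at *
  rw [map_add]
  exact gaussV_add_eq_of_lt u d hlt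

theorem nuHat_zero (u : ValOn (Polynomial F) Γ) (a : F) (d : Γ) : nuHat u a d 0 = ⊤ := by
  unfold nuHat
  rw [map_zero, gaussV_zero]

theorem nuHat_neg (u : ValOn (Polynomial F) Γ) (a : F) (d : Γ) (h : Polynomial F) :
    nuHat u a d (-h) = nuHat u a d h := by
  unfold nuHat
  rw [map_neg, gaussV_neg]

theorem nuHat_ne_top (u : ValOn (Polynomial F) Γ) (a : F) (d : Γ) {h : Polynomial F}
    (hh : h ≠ 0) : nuHat u a d h ≠ ⊤ :=
  gaussV_ne_top u d (fun he => hh (Polynomial.taylor_injective a (by rw [he, map_zero])))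

theorem nuHat_C (u : ValOn (Polynomial F) Γ) (a : F) (d : Γ) (c : F) :
    nuHat u a d (Polynomial.C c) = u.v (Polynomial.C c) := by
  unfold nuHat
  rw [Polynomial.taylor_C, gaussV_C]

theorem nuHat_one (u : ValOn (Polynomial F) Γ) (a : F) (d : Γ) : nuHat u a d 1 = 0 := by
  rw [← Polynomial.C_1, nuHat_C, Polynomial.C_1, u.v_one]

theorem nuHat_X_sub_C (u : ValOn (Polynomial F) Γ) (a : F) (d : Γ) (b : F) :
    nuHat u a d (Polynomial.X - Polynomial.C b)
      = min (u.v (Polynomial.C (a - b))) ((d : WithTop Γ)) := by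
  unfold nuHat
  have ht : Polynomial.taylor a (Polynomial.X - Polynomial.C b)
      = Polynomial.X + Polynomial.C (a - b) := by
    rw [map_sub, Polynomial.taylor_X, Polynomial.taylor_C, Polynomial.C_sub]
    ring
  rw [ht, gaussV_X_add_C]

theorem nuHat_le_eval (u : ValOn (Polynomial F) Γ) (a : F) (d : Γ) (h : Polynomial F) :
    nuHat u a d h ≤ u.v (Polynomial.C (h.eval a)) := by
  have := gaussV_le u d (Polynomial.taylor a h) 0
  rwa [Polynomial.taylor_coeff_zero, zero_nsmul, WithTop.coe_zero, add_zero] at this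

theorem nuHat_prod_linear (u : ValOn (Polynomial F) Γ) (a : F) (d : Γ) (s : Multiset F) :
    nuHat u a d ((s.map fun b => Polynomial.X - Polynomial.C b).prod)
      = (s.map fun b => min (u.v (Polynomial.C (a - b))) ((d : WithTop Γ))).sum := by
  induction s using Multiset.induction_on with
  | empty => simpa using nuHat_one u a d
  | cons b t ih =>
      rw [Multiset.map_cons, Multiset.prod_cons, nuHat_mul, nuHat_X_sub_C,
        Multiset.map_cons, Multiset.sum_cons, ih]

variable [IsAlgClosed F]

theorem factor_eq {h : Polynomial F} (hh : h ≠ 0) :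
    Polynomial.C h.leadingCoeff
      * (h.roots.map fun b => Polynomial.X - Polynomial.C b).prod = h :=
  Polynomial.C_leadingCoeff_mul_prod_multiset_X_sub_C
    (Polynomial.splits_iff_card_roots.1 (IsAlgClosed.splits _))

theorem nuHat_factor (u : ValOn (Polynomial F) Γ) (a : F) (d : Γ) {h : Polynomial F}
    (hh : h ≠ 0) : nuHat u a d h = u.v (Polynomial.C h.leadingCoeff)
      + (h.roots.map fun b => min (u.v (Polynomial.C (a - b))) ((d : WithTop Γ))).sum := by
  conv_lhs => rw [← factor_eq hh]
  rw [nuHat_mul, nuHat_C, nuHat_prod_linear]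

theorem v_factor (u : ValOn (Polynomial F) Γ) {h : Polynomial F} (hh : h ≠ 0) :
    u.v h = u.v (Polynomial.C h.leadingCoeff)
      + (h.roots.map fun b => u.v (Polynomial.X - Polynomial.C b)).sum := by
  conv_lhs => rw [← factor_eq hh]
  rw [u.v_mul, v_multiset_prod]

theorem v_eval_factor (u : ValOn (Polynomial F) Γ) (a : F) {h : Polynomial F} (hh : h ≠ 0) :
    u.v (Polynomial.C (h.eval a)) = u.v (Polynomial.C h.leadingCoeff)
      + (h.roots.map fun b => u.v (Polynomial.C (a - b))).sum := by
  have he : h.eval a = h.leadingCoeff * (h.roots.map fun b => a - b).prod := by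
    conv_lhs => rw [← factor_eq hh]
    rw [Polynomial.eval_mul, Polynomial.eval_C, Polynomial.eval_multiset_prod,
      Multiset.map_map]
    congr 1
    refine congrArg Multiset.prod (Multiset.map_congr rfl fun b _ => ?_)
    simp
  have hc : Polynomial.C ((h.roots.map fun b => a - b).prod)
      = ((h.roots.map fun b => a - b).map Polynomial.C).prod :=
    map_multiset_prod (Polynomial.C : F →+* Polynomial F) _
  have hm : ((h.roots.map fun b => a - b).map Polynomial.C)
      = h.roots.map fun b => Polynomial.C (a - b) := by
    rw [Multiset.map_map]; rfl
  rw [he, Polynomial.C_mul, u.v_mul, hc, hm, v_multiset_prod]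

end NuHat

/-! ### Key polynomial setup -/

theorem multiset_sup_mem {α : Type*} [LinearOrder α] [OrderBot α] (s : Multiset α) (hs : s ≠ 0) :
    s.sup ∈ s := by
  induction s using Multiset.induction_on with
  | empty => exact absurd rfl hs
  | cons a t ih =>
      rw [Multiset.sup_cons]
      rcases eq_or_ne t 0 with rfl | ht
      · simp
      · rcases le_total a t.sup with h | h
        · rw [sup_eq_right.2 h]; exact Multiset.mem_cons_of_mem (ih ht)
        · rw [sup_eq_left.2 h]; exact Multiset.mem_cons_self a t

section Key

variable {K : Type*} [Field K]

theorem root_le_deltaOf (wbar : ValOn (Polynomial (AlgebraicClosure K)) Γ)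
    (g : Polynomial (AlgebraicClosure K)) {b : AlgebraicClosure K} (hb : b ∈ g.roots) :
    ((wbar.v (Polynomial.X - Polynomial.C b) : WithTop Γ) : WithBot (WithTop Γ))
      ≤ deltaOf wbar g :=
  Multiset.le_sup (Multiset.mem_map_of_mem _ hb)

theorem deltaOf_attained (wbar : ValOn (Polynomial (AlgebraicClosure K)) Γ)
    {g : Polynomial (AlgebraicClosure K)} (hg : g.roots ≠ 0) :
    ∃ b ∈ g.roots, deltaOf wbar g
      = ((wbar.v (Polynomial.X - Polynomial.C b) : WithTop Γ) : WithBot (WithTop Γ)) := by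
  have hmem := multiset_sup_mem
    (g.roots.map (fun a => ((wbar.v (Polynomial.X - Polynomial.C a) : WithTop Γ)
      : WithBot (WithTop Γ)))) (by simpa using hg)
  obtain ⟨b, hb, he⟩ := Multiset.mem_map.1 hmem
  exact ⟨b, hb, he.symm⟩

theorem natDegree_mapAC (f : Polynomial K) :
    (f.map (algebraMap K (AlgebraicClosure K))).natDegree = f.natDegree :=
  Polynomial.natDegree_map_eq_of_injective (algebraMap K (AlgebraicClosure K)).injective f

theorem mapAC_ne_zero {f : Polynomial K} (hf : f ≠ 0) :
    f.map (algebraMap K (AlgebraicClosure K)) ≠ 0 :=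
  (Polynomial.map_ne_zero_iff (algebraMap K (AlgebraicClosure K)).injective).2 hf

theorem roots_mapAC_ne_zero {f : Polynomial K} (hf : 1 ≤ f.natDegree) :
    (f.map (algebraMap K (AlgebraicClosure K))).roots ≠ 0 := by
  have hf0 : f ≠ 0 := fun h => by simp [h] at hf
  intro h
  have hcard := Polynomial.splits_iff_card_roots.1
    (IsAlgClosed.splits (f.map (algebraMap K (AlgebraicClosure K))))
  rw [h, natDegree_mapAC] at hcard
  simp at hcard
  omega

theorem delta_lt_of_small (wbar : ValOn (Polynomial (AlgebraicClosure K)) Γ) {n : ℕ}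
    {Q : Polynomial K} (hQ : IsKeyPoly wbar Q) (hn : Q.natDegree = n)
    {f : Polynomial K} (hf0 : f ≠ 0) (hdeg : f.natDegree < n) :
    delta wbar f < delta wbar Q := by
  by_contra hle
  rw [not_lt] at hle
  have hdd := hQ.2 f hf0 hle
  rw [Polynomial.degree_eq_natDegree hf0, Polynomial.degree_eq_natDegree hQ.1.ne_zero, hn]
    at hdd
  exact absurd (by exact_mod_cast hdd) (not_le.2 hdeg)

/-- All the data attached to a key polynomial `Q` of degree `n`:
a maximizing root `a` of `Q` in the algebraic closure together with its
(finite) value `d = ν̄(x - a) = δ(Q)`. -/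
structure KeySetup (w : ValOn (Polynomial K) Γ)
    (wbar : ValOn (Polynomial (AlgebraicClosure K)) Γ) (n : ℕ) (Q : Polynomial K) where
  a : AlgebraicClosure K
  d : Γ
  key : IsKeyPoly wbar Q
  ndeg : Q.natDegree = n
  npos : 1 ≤ n
  hbar : ∀ f : Polynomial K, wbar.v (f.map (algebraMap K (AlgebraicClosure K))) = w.v f
  mem : a ∈ (Q.map (algebraMap K (AlgebraicClosure K))).roots
  val : wbar.v (Polynomial.X - Polynomial.C a) = (d : WithTop Γ)
  max : ∀ b ∈ (Q.map (algebraMap K (AlgebraicClosure K))).roots,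
          wbar.v (Polynomial.X - Polynomial.C b) ≤ (d : WithTop Γ)

variable {w : ValOn (Polynomial K) Γ} {wbar : ValOn (Polynomial (AlgebraicClosure K)) Γ}
  {n : ℕ} {Q Q' : Polynomial K}

theorem keySetup_exists (hbar : ∀ f : Polynomial K,
      wbar.v (f.map (algebraMap K (AlgebraicClosure K))) = w.v f)
    (hQ : Q ∈ Psi wbar n) (hn : 1 ≤ n) (htop : w.v Q ≠ ⊤) :
    Nonempty (KeySetup w wbar n Q) := by
  have hn1 : 1 ≤ Q.natDegree := by rw [hQ.2]; exact hn
  obtain ⟨a, ha, hda⟩ := deltaOf_attained wbar (roots_mapAC_ne_zero hn1)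
  have hmax : ∀ b ∈ (Q.map (algebraMap K (AlgebraicClosure K))).roots,
      wbar.v (Polynomial.X - Polynomial.C b) ≤ wbar.v (Polynomial.X - Polynomial.C a) := by
    intro b hb
    have h1 : ((wbar.v (Polynomial.X - Polynomial.C b) : WithTop Γ) : WithBot (WithTop Γ))
        ≤ deltaOf wbar (Q.map (algebraMap K (AlgebraicClosure K))) :=
      root_le_deltaOf wbar _ hb
    rw [hda] at h1
    exact_mod_cast h1
  have hatop : wbar.v (Polynomial.X - Polynomial.C a) ≠ ⊤ := by
    intro ht
    apply htop
    rw [← hbar Q, v_factor wbar (mapAC_ne_zero hQ.1.1.ne_zero),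
      sum_top_of_mem ha ht, add_top]
  obtain ⟨d, hd⟩ := WithTop.ne_top_iff_exists.1 hatop
  exact ⟨⟨a, d, hQ.1, hQ.2, hn, hbar, ha, hd.symm, fun b hb => hd ▸ hmax b hb⟩⟩

namespace KeySetup

theorem monic (S : KeySetup w wbar n Q) : Q.Monic := S.key.1

theorem npos' (S : KeySetup w wbar n Q) : 1 ≤ Q.natDegree := by rw [S.ndeg]; exact S.npos

theorem delta_eq (S : KeySetup w wbar n Q) : delta wbar Q = ((S.d : WithTop Γ) : WithBot (WithTop Γ)) := by
  refine le_antisymm (Multiset.sup_le.2 ?_) ?_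
  · intro x hx
    obtain ⟨b, hb, rfl⟩ := Multiset.mem_map.1 hx
    exact_mod_cast S.max b hb
  · rw [← S.val]
    exact root_le_deltaOf wbar _ S.mem

theorem root_eval_zero (S : KeySetup w wbar n Q) :
    (Q.map (algebraMap K (AlgebraicClosure K))).eval S.a = 0 :=
  Polynomial.isRoot_of_mem_roots S.mem

/-- roots of polynomials of degree `< n` have value `< d`. -/
theorem small_root_lt (S : KeySetup w wbar n Q) {g : Polynomial K} (hg0 : g ≠ 0) (hdeg : g.natDegree < n)
    {b : AlgebraicClosure K} (hb : b ∈ (g.map (algebraMap K (AlgebraicClosure K))).roots) :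
    wbar.v (Polynomial.X - Polynomial.C b) < (S.d : WithTop Γ) := by
  have h1 := root_le_deltaOf wbar _ hb
  have h2 : delta wbar g < delta wbar Q := delta_lt_of_small wbar S.key S.ndeg hg0 hdeg
  rw [S.delta_eq] at h2
  have h3 := lt_of_le_of_lt h1 h2
  exact_mod_cast h3

theorem vC_sub_root_eq (S : KeySetup w wbar n Q) {b : AlgebraicClosure K}
    (hb : wbar.v (Polynomial.X - Polynomial.C b) < (S.d : WithTop Γ)) :
    wbar.v (Polynomial.C (S.a - b)) = wbar.v (Polynomial.X - Polynomial.C b) := by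
  have he : Polynomial.C (S.a - b)
      = (Polynomial.X - Polynomial.C b) - (Polynomial.X - Polynomial.C S.a) := by
    rw [Polynomial.C_sub]; ring
  rw [he]
  exact v_sub_eq_of_lt wbar (by rw [S.val]; exact hb)

theorem vC_sub_root_ge (S : KeySetup w wbar n Q) {b : AlgebraicClosure K} :
    min (wbar.v (Polynomial.X - Polynomial.C b)) ((S.d : WithTop Γ))
      ≤ wbar.v (Polynomial.C (S.a - b)) := by
  have he : Polynomial.C (S.a - b)
      = (Polynomial.X - Polynomial.C b) - (Polynomial.X - Polynomial.C S.a) := by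
    rw [Polynomial.C_sub]; ring
  rw [he, ← S.val]
  exact v_sub_ge wbar _ _

theorem lemE (S : KeySetup w wbar n Q) {g : Polynomial K} (hdeg : g.natDegree < n) :
    wbar.v (Polynomial.C ((g.map (algebraMap K (AlgebraicClosure K))).eval S.a)) = w.v g := by
  rcases eq_or_ne g 0 with rfl | hg0
  · rw [Polynomial.map_zero, Polynomial.eval_zero, Polynomial.C_0, wbar.v_zero, w.v_zero]
  · rw [v_eval_factor wbar S.a (mapAC_ne_zero hg0), ← S.hbar g,
      v_factor wbar (mapAC_ne_zero hg0)]
    congr 1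
    refine congrArg Multiset.sum (Multiset.map_congr rfl fun b hb => ?_)
    exact S.vC_sub_root_eq (S.small_root_lt hg0 hdeg hb)

theorem f1 (S : KeySetup w wbar n Q) {g : Polynomial K} (hdeg : g.natDegree < n) :
    nuHat wbar S.a S.d (g.map (algebraMap K (AlgebraicClosure K))) = w.v g := by
  rcases eq_or_ne g 0 with rfl | hg0
  · rw [Polynomial.map_zero, nuHat_zero, w.v_zero]
  · rw [nuHat_factor wbar S.a S.d (mapAC_ne_zero hg0), ← S.hbar g,
      v_factor wbar (mapAC_ne_zero hg0)]
    congr 1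
    refine congrArg Multiset.sum (Multiset.map_congr rfl fun b hb => ?_)
    have hlt := S.small_root_lt hg0 hdeg hb
    rw [S.vC_sub_root_eq hlt]
    exact min_eq_left hlt.le

theorem f2 (S : KeySetup w wbar n Q) : nuHat wbar S.a S.d (Q.map (algebraMap K (AlgebraicClosure K))) = w.v Q := by
  rw [nuHat_factor wbar S.a S.d (mapAC_ne_zero S.monic.ne_zero), ← S.hbar Q,
    v_factor wbar (mapAC_ne_zero S.monic.ne_zero)]
  congr 1
  refine congrArg Multiset.sum (Multiset.map_congr rfl fun b hb => ?_)
  rcases lt_or_eq_of_le (S.max b hb) with hlt | heq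
  · rw [S.vC_sub_root_eq hlt]
    exact min_eq_left hlt.le
  · have hge := S.vC_sub_root_ge (b := b)
    rw [heq, min_self] at hge
    rw [min_eq_right hge, heq]

end KeySetup

end Key

section Key2

variable {K : Type*} [Field K]
variable {w : ValOn (Polynomial K) Γ} {wbar : ValOn (Polynomial (AlgebraicClosure K)) Γ}
  {n : ℕ} {Q Q' : Polynomial K}

namespace KeySetup

theorem ethm (S : KeySetup w wbar n Q) (f : Polynomial K) :
    nuHat wbar S.a S.d (f.map (algebraMap K (AlgebraicClosure K))) = truncVal w Q f := by
  have hdegQ : Q.degree = (n : WithBot ℕ) := by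
    rw [Polynomial.degree_eq_natDegree S.monic.ne_zero, S.ndeg]
  have hsmall : ∀ p : Polynomial K, p.degree < Q.degree → p.natDegree < n := by
    intro p hp
    rcases eq_or_ne p 0 with rfl | hp0
    · simpa using Nat.lt_of_lt_of_le Nat.zero_lt_one S.npos
    · rw [hdegQ] at hp
      exact (Polynomial.natDegree_lt_iff_degree_lt hp0).2 hp
  have H : ∀ (N : ℕ) (f : Polynomial K), f.natDegree ≤ N →
      nuHat wbar S.a S.d (f.map (algebraMap K (AlgebraicClosure K))) = truncVal w Q f := by
    intro N
    induction N with
    | zero =>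
        intro f hf
        have hdeg : f.degree < Q.degree := by
          refine lt_of_le_of_lt Polynomial.degree_le_natDegree ?_
          rw [Nat.le_zero.1 hf, hdegQ]
          exact_mod_cast S.npos
        rw [truncVal_small w S.monic hdeg, S.f1 (hsmall f hdeg)]
    | succ N ih =>
        intro f hf
        rcases lt_or_ge f.degree Q.degree with hdeg | hdeg
        · rw [truncVal_small w S.monic hdeg, S.f1 (hsmall f hdeg)]
        · have hgdeg : (f /ₘ Q).natDegree ≤ N := by
            rw [Polynomial.natDegree_divByMonic f S.monic]
            have h1 : Q.natDegree ≤ f.natDegree := Polynomial.natDegree_le_natDegree hdeg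
            have h2 := S.npos'
            omega
          have hrdeg : (f %ₘ Q).natDegree < n :=
            hsmall _ (Polynomial.degree_modByMonic_lt f S.monic)
          have hA := S.f1 hrdeg
          have hgIH := ih (f /ₘ Q) hgdeg
          have hB : nuHat wbar S.a S.d ((Q * (f /ₘ Q)).map (algebraMap K (AlgebraicClosure K)))
              = w.v Q + truncVal w Q (f /ₘ Q) := by
            rw [Polynomial.map_mul, nuHat_mul, S.f2, hgIH]
          have hsplit : f.map (algebraMap K (AlgebraicClosure K))
              = (f %ₘ Q).map (algebraMap K (AlgebraicClosure K))
                + (Q * (f /ₘ Q)).map (algebraMap K (AlgebraicClosure K)) := by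
            rw [← Polynomial.map_add, Polynomial.modByMonic_add_div f Q]
          have hbound : nuHat wbar S.a S.d (f.map (algebraMap K (AlgebraicClosure K)))
              ≤ w.v (f %ₘ Q) := by
            refine le_trans (nuHat_le_eval wbar S.a S.d _) (le_of_eq ?_)
            have he : (f.map (algebraMap K (AlgebraicClosure K))).eval S.a
                = ((f %ₘ Q).map (algebraMap K (AlgebraicClosure K))).eval S.a := by
              rw [hsplit, Polynomial.eval_add, Polynomial.map_mul, Polynomial.eval_mul,
                S.root_eval_zero, zero_mul, add_zero]
            rw [he]
            exact S.lemE hrdeg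
          rw [truncVal_rec w S.monic S.npos' f]
          rcases le_or_gt (w.v (f %ₘ Q)) (w.v Q + truncVal w Q (f /ₘ Q)) with hAB | hAB
          · rw [min_eq_left hAB]
            refine le_antisymm hbound ?_
            have hmin := nuHat_min_le_add wbar S.a S.d
              ((f %ₘ Q).map (algebraMap K (AlgebraicClosure K)))
              ((Q * (f /ₘ Q)).map (algebraMap K (AlgebraicClosure K)))
            rw [← hsplit, hA, hB] at hmin
            exact le_trans (le_min le_rfl hAB) hmin
          · rw [min_eq_right hAB.le]
            refine le_antisymm ?_ ?_
            · by_contra hgt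
              rw [not_le] at hgt
              have h1 : nuHat wbar S.a S.d
                  (-((Q * (f /ₘ Q)).map (algebraMap K (AlgebraicClosure K))))
                  < nuHat wbar S.a S.d (f.map (algebraMap K (AlgebraicClosure K))) := by
                rw [nuHat_neg, hB]; exact hgt
              have h2 := nuHat_add_eq_of_lt wbar S.a S.d h1
              have h3 : -((Q * (f /ₘ Q)).map (algebraMap K (AlgebraicClosure K)))
                  + f.map (algebraMap K (AlgebraicClosure K))
                  = (f %ₘ Q).map (algebraMap K (AlgebraicClosure K)) := by
                rw [hsplit]; ring
              rw [h3, hA, nuHat_neg, hB] at h2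
              exact absurd h2 (ne_of_gt hAB)
            · have hmin := nuHat_min_le_add wbar S.a S.d
                ((f %ₘ Q).map (algebraMap K (AlgebraicClosure K)))
                ((Q * (f /ₘ Q)).map (algebraMap K (AlgebraicClosure K)))
              rw [← hsplit, hA, hB] at hmin
              exact le_trans (le_of_eq (min_eq_right hAB.le).symm) hmin
  exact H f.natDegree f le_rfl

theorem hW (S : KeySetup w wbar n Q) (S' : KeySetup w wbar n Q') (hdd : S.d ≤ S'.d) :
    (S.d : WithTop Γ) ≤ wbar.v (Polynomial.C (S.a - S'.a)) := by
  by_contra hlt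
  rw [not_le] at hlt
  have hlt2 : wbar.v (Polynomial.C (S.a - S'.a))
      < wbar.v (Polynomial.X - Polynomial.C S.a) := by
    rw [S.val]; exact hlt
  have h2 := v_add_eq_of_lt wbar hlt2
  have he : Polynomial.C (S.a - S'.a) + (Polynomial.X - Polynomial.C S.a)
      = Polynomial.X - Polynomial.C S'.a := by
    rw [Polynomial.C_sub]; ring
  rw [he, S'.val] at h2
  have hc : (S.d : WithTop Γ) ≤ (S'.d : WithTop Γ) := by exact_mod_cast hdd
  rw [h2] at hc
  exact absurd (lt_of_le_of_lt hc hlt) (lt_irrefl _)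

theorem perRoot (S : KeySetup w wbar n Q) (S' : KeySetup w wbar n Q') (hdd : S.d ≤ S'.d)
    (c : AlgebraicClosure K) :
    min (wbar.v (Polynomial.C (S.a - c))) ((S.d : WithTop Γ))
      ≤ min (wbar.v (Polynomial.C (S'.a - c))) ((S'.d : WithTop Γ)) := by
  have hw := hW S S' hdd
  have hdd' : (S.d : WithTop Γ) ≤ (S'.d : WithTop Γ) := by exact_mod_cast hdd
  rcases le_or_gt (S.d : WithTop Γ) (wbar.v (Polynomial.C (S'.a - c))) with h | h
  · exact le_trans (min_le_right _ _) (le_min h hdd')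
  · have he : Polynomial.C (S.a - c) = Polynomial.C (S'.a - c) + Polynomial.C (S.a - S'.a) := by
      rw [← Polynomial.C_add]
      congr 1
      ring
    have hv : wbar.v (Polynomial.C (S.a - c)) = wbar.v (Polynomial.C (S'.a - c)) := by
      rw [he]
      exact v_add_eq_of_lt wbar (lt_of_lt_of_le h hw)
    rw [hv, min_eq_left h.le, min_eq_left (lt_of_lt_of_le h hdd').le]

theorem mono (S : KeySetup w wbar n Q) (S' : KeySetup w wbar n Q') (hdd : S.d ≤ S'.d)
    (f : Polynomial K) : truncVal w Q f ≤ truncVal w Q' f := by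
  rw [← S.ethm f, ← S'.ethm f]
  rcases eq_or_ne f 0 with rfl | hf0
  · rw [Polynomial.map_zero, nuHat_zero, nuHat_zero]
  · rw [nuHat_factor wbar S.a S.d (mapAC_ne_zero hf0),
      nuHat_factor wbar S'.a S'.d (mapAC_ne_zero hf0)]
    exact add_le_add le_rfl (Multiset.sum_map_le_sum_map _ _ fun b _ => perRoot S S' hdd b)

theorem trunc_pair_eq (S : KeySetup w wbar n Q) (S' : KeySetup w wbar n Q') (hdd : S.d ≤ S'.d)
    (hne : Q' ≠ Q) : truncVal w Q Q' = w.v Q := by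
  have hdeg : Q'.degree = Q.degree := by
    rw [Polynomial.degree_eq_natDegree S.monic.ne_zero,
      Polynomial.degree_eq_natDegree S'.monic.ne_zero, S.ndeg, S'.ndeg]
  have hsub : (Q' - Q).degree < Q.degree := by
    rw [← hdeg]
    exact Polynomial.degree_sub_lt hdeg S'.monic.ne_zero
      (by rw [S.monic.leadingCoeff, S'.monic.leadingCoeff])
  have hsub0 : Q' - Q ≠ 0 := sub_ne_zero.2 hne
  have hsubdeg : (Q' - Q).natDegree < n := by
    refine (Polynomial.natDegree_lt_iff_degree_lt hsub0).2 ?_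
    rw [← S.ndeg, ← Polynomial.degree_eq_natDegree S.monic.ne_zero]
    exact hsub
  have hvh : w.v Q ≤ w.v (Q' - Q) := by
    rw [← S'.lemE hsubdeg]
    have he : ((Q' - Q).map (algebraMap K (AlgebraicClosure K))).eval S'.a
        = -((Q.map (algebraMap K (AlgebraicClosure K))).eval S'.a) := by
      rw [Polynomial.map_sub, Polynomial.eval_sub, S'.root_eval_zero, zero_sub]
    rw [he, map_neg, wbar.v_neg, v_eval_factor wbar S'.a (mapAC_ne_zero S.monic.ne_zero),
      ← S.hbar Q, v_factor wbar (mapAC_ne_zero S.monic.ne_zero)]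
    refine add_le_add le_rfl (Multiset.sum_map_le_sum_map _ _ fun b hb => ?_)
    have hbd : wbar.v (Polynomial.X - Polynomial.C b) ≤ (S'.d : WithTop Γ) :=
      le_trans (S.max b hb) (by exact_mod_cast hdd)
    calc wbar.v (Polynomial.X - Polynomial.C b)
        = min (wbar.v (Polynomial.X - Polynomial.C b)) ((S'.d : WithTop Γ)) :=
          (min_eq_left hbd).symm
      _ ≤ wbar.v (Polynomial.C (S'.a - b)) := S'.vC_sub_root_ge
  exact truncVal_key_pair w S.monic S.npos' (by rw [S.ndeg, S'.ndeg]) hsub hvh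

theorem ord (S : KeySetup w wbar n Q) (S' : KeySetup w wbar n Q') (hdd : S.d ≤ S'.d) :
    w.v Q ≤ w.v Q' := by
  rcases eq_or_ne Q' Q with rfl | hne
  · exact le_rfl
  calc w.v Q = truncVal w Q Q' := (trunc_pair_eq S S' hdd hne).symm
    _ ≤ truncVal w Q' Q' := mono S S' hdd Q'
    _ = w.v Q' := truncVal_self w S'.monic S'.npos'

theorem exists_big_root (S' : KeySetup w wbar n Q') {g : Polynomial K} (hg0 : g ≠ 0)
    (hlim : truncVal w Q' g < w.v g) :
    ∃ b ∈ (g.map (algebraMap K (AlgebraicClosure K))).roots,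
      (S'.d : WithTop Γ) < wbar.v (Polynomial.X - Polynomial.C b) := by
  by_contra hno
  push_neg at hno
  have heq : truncVal w Q' g = w.v g := by
    rw [← S'.ethm g, nuHat_factor wbar S'.a S'.d (mapAC_ne_zero hg0), ← S'.hbar g,
      v_factor wbar (mapAC_ne_zero hg0)]
    congr 1
    refine congrArg Multiset.sum (Multiset.map_congr rfl fun b hb => ?_)
    rcases lt_or_eq_of_le (hno b hb) with hlt | heq2
    · rw [S'.vC_sub_root_eq hlt]
      exact min_eq_left hlt.le
    · have hge := S'.vC_sub_root_ge (b := b)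
      rw [heq2, min_self] at hge
      rw [min_eq_right hge, heq2]
  rw [heq] at hlim
  exact lt_irrefl _ hlim

theorem strict (S : KeySetup w wbar n Q) (S' : KeySetup w wbar n Q') (hdd : S.d < S'.d)
    {g : Polynomial K} (hg0 : g ≠ 0) (hlimQ : truncVal w Q g < w.v g)
    (hlimQ' : truncVal w Q' g < w.v g) :
    truncVal w Q g < truncVal w Q' g := by
  obtain ⟨b, hb, hbig⟩ := exists_big_root S' hg0 hlimQ'
  have hcoe : (S.d : WithTop Γ) < (S'.d : WithTop Γ) := by exact_mod_cast hdd
  have hL : min (wbar.v (Polynomial.C (S.a - b))) ((S.d : WithTop Γ)) = (S.d : WithTop Γ) := by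
    have h1 : wbar.v (Polynomial.X - Polynomial.C S.a)
        < wbar.v (Polynomial.X - Polynomial.C b) := by
      rw [S.val]; exact lt_trans hcoe hbig
    have he : Polynomial.C (S.a - b)
        = (Polynomial.X - Polynomial.C b) - (Polynomial.X - Polynomial.C S.a) := by
      rw [Polynomial.C_sub]; ring
    rw [he, v_sub_eq_of_lt' wbar h1, S.val, min_self]
  have hR : min (wbar.v (Polynomial.C (S'.a - b))) ((S'.d : WithTop Γ)) = (S'.d : WithTop Γ) := by
    have h1 : wbar.v (Polynomial.X - Polynomial.C S'.a)
        < wbar.v (Polynomial.X - Polynomial.C b) := by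
      rw [S'.val]; exact hbig
    have he : Polynomial.C (S'.a - b)
        = (Polynomial.X - Polynomial.C b) - (Polynomial.X - Polynomial.C S'.a) := by
      rw [Polynomial.C_sub]; ring
    rw [he, v_sub_eq_of_lt' wbar h1, S'.val, min_self]
  have hnetopL : truncVal w Q g ≠ ⊤ := ne_top_of_lt hlimQ
  rw [← S.ethm g, ← S'.ethm g, nuHat_factor wbar S.a S.d (mapAC_ne_zero hg0),
    nuHat_factor wbar S'.a S'.d (mapAC_ne_zero hg0)]
  rw [← S.ethm g, nuHat_factor wbar S.a S.d (mapAC_ne_zero hg0)] at hnetopL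
  have hsumne : (((g.map (algebraMap K (AlgebraicClosure K))).roots).map
      (fun b => min (wbar.v (Polynomial.C (S.a - b))) ((S.d : WithTop Γ)))).sum ≠ ⊤ :=
    fun h => hnetopL (by rw [h, add_top])
  refine WithTop.add_lt_add_left ?_ ?_
  · exact vC_ne_top wbar (Polynomial.leadingCoeff_ne_zero.2 (mapAC_ne_zero hg0))
  · exact sum_lt_sum (fun c _ => perRoot S S' hdd.le c) hb (by rw [hL, hR]; exact hcoe) hsumne

end KeySetup

end Key2


theorem exp_digits {K : Type*} [Field K] {Qn : Polynomial K} (hm : Qn.Monic) :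
    ∀ (r : ℕ) (c : ℕ → Polynomial K), (∀ j, (c j).degree < Qn.degree) →
      ∀ j, ((∑ i ∈ Finset.range (r + 1), c i * Qn ^ i) /ₘ Qn ^ j) %ₘ Qn
        = if j ≤ r then c j else 0 := by
  intro r
  induction r with
  | zero =>
      intro c hc j
      rw [Finset.range_one, Finset.sum_singleton, pow_zero, mul_one]
      match j with
      | 0 =>
          rw [pow_zero, Polynomial.divByMonic_one,
            (Polynomial.modByMonic_eq_self_iff hm).2 (hc 0), if_pos (Nat.le_refl 0)]
      | (k + 1) =>
          rw [divByMonic_pow_eq_zero' hm (hc 0) (Nat.succ_le_succ (Nat.zero_le k)),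
            Polynomial.zero_modByMonic, if_neg (by omega)]
  | succ r ih =>
      intro c hc j
      have hsum : (∑ i ∈ Finset.range (r + 1 + 1), c i * Qn ^ i)
          = c 0 + Qn * (∑ i ∈ Finset.range (r + 1), c (i + 1) * Qn ^ i) := by
        rw [Finset.sum_range_succ', pow_zero, mul_one, Finset.mul_sum, add_comm]
        congr 1
        exact Finset.sum_congr rfl fun i _ => by rw [pow_succ']; ring
      have hdm : (∑ i ∈ Finset.range (r + 1 + 1), c i * Qn ^ i) /ₘ Qn
            = (∑ i ∈ Finset.range (r + 1), c (i + 1) * Qn ^ i)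
          ∧ (∑ i ∈ Finset.range (r + 1 + 1), c i * Qn ^ i) %ₘ Qn = c 0 :=
        Polynomial.div_modByMonic_unique _ _ hm ⟨by rw [hsum], hc 0⟩
      match j with
      | 0 =>
          rw [pow_zero, Polynomial.divByMonic_one, hdm.2, if_pos (Nat.zero_le _)]
      | (k + 1) =>
          have he : (∑ i ∈ Finset.range (r + 1 + 1), c i * Qn ^ i) /ₘ Qn ^ (k + 1)
              = (∑ i ∈ Finset.range (r + 1), c (i + 1) * Qn ^ i) /ₘ Qn ^ k := by
            rw [pow_succ', divByMonic_mul_monic _ _ _ hm (hm.pow k), hdm.1]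
          rw [he, ih (fun i => c (i + 1)) (fun i => hc (i + 1)) k]
          by_cases hk : k ≤ r
          · rw [if_pos hk, if_pos (by omega)]
          · rw [if_neg hk, if_neg (by omega)]


theorem truncVal_eq_inf' {K : Type*} [Field K] (w : ValOn (Polynomial K) Γ)
    (q f : Polynomial K) {M : ℕ} (G : ℕ → WithTop Γ)
    (h1 : ∀ j, j ≤ f.natDegree → j ≤ M → w.v (((f /ₘ q ^ j) %ₘ q) * q ^ j) = G j)
    (h2 : ∀ j, j ≤ f.natDegree → M < j → w.v (((f /ₘ q ^ j) %ₘ q) * q ^ j) = ⊤)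
    (h3 : ∀ j, j ≤ M → f.natDegree < j → G j = ⊤) :
    truncVal w q f = (Finset.range (M + 1)).inf' Finset.nonempty_range_add_one G :=
  inf'_range_eq_of _ _ h1 h2 h3

end KPAux

end KPAux

/-- `𝔳 = (ν_Q)_{Q ∈ Ψ_n}` is a totally ordered subset of `V` with no
maximal element, `Q_n` has least degree among non-`𝔳`-stable polynomials, and with
`γ = ν(Q_n)`, for each `Q_n`-expansion `f = ∑ f_j Q_n^j`, one has
`ν_{Q_n}(f) = min_j (𝔳(f_j) + jγ)` (the stable value `𝔳(f_j)` being rendered as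
`ν_Q(f_j)` for all `Q ⪰` some `Q₀ ∈ Ψ_n`). -/
theorem psi_totally_ordered_no_max_and_Qn_least_unstable
    {K : Type*} [Field K] {Γ : Type*} [AddCommGroup Γ] [LinearOrder Γ] [IsOrderedAddMonoid Γ]
    (w : ValOn (Polynomial K) Γ)
    (wbar : ValOn (Polynomial (AlgebraicClosure K)) Γ)
    (hbar : ∀ f : Polynomial K, wbar.v (f.map (algebraMap K (AlgebraicClosure K))) = w.v f)
    (n : ℕ) (hne : ∃ Q : Polynomial K, Q ∈ Psi wbar n)
    (hnomax : ∀ Q ∈ Psi wbar n, ∃ Q' ∈ Psi wbar n, w.v Q < w.v Q')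
    (Qn : Polynomial K) (hQn : IsLimitKeyPoly w wbar n Qn)
    (ν₀ : ValOn K Γ) (hext : ∀ a : K, w.v (Polynomial.C a) = ν₀.v a) :
    (∀ Q ∈ Psi wbar n, ∀ Q' ∈ Psi wbar n,
      (∀ f : Polynomial K, truncVal w Q f ≤ truncVal w Q' f) ∨
      (∀ f : Polynomial K, truncVal w Q' f ≤ truncVal w Q f)) ∧
    (∀ Q ∈ Psi wbar n, ∃ Q' ∈ Psi wbar n,
      (∀ f : Polynomial K, truncVal w Q f ≤ truncVal w Q' f) ∧
      (∃ g : Polynomial K, truncVal w Q g < truncVal w Q' g)) ∧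
    (¬ PsiStable w wbar n Qn) ∧
    (∀ g : Polynomial K, ¬ PsiStable w wbar n g → Qn.degree ≤ g.degree) ∧
    (∀ (f : Polynomial K) (r : ℕ) (c : ℕ → Polynomial K),
      f = ∑ j ∈ Finset.range (r + 1), c j * Qn ^ j →
      (∀ j : ℕ, (c j).degree < Qn.degree) →
      ∃ Q₀ ∈ Psi wbar n, ∀ Q ∈ Psi wbar n,
        (∀ h : Polynomial K, truncVal w Q₀ h ≤ truncVal w Q h) →
        truncVal w Qn f = (Finset.range (r + 1)).inf' Finset.nonempty_range_add_one
          (fun j => truncVal w Q (c j) + j • w.v Qn)) := by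
  classical
  rcases Nat.eq_zero_or_pos n with hn0 | hn1
  · exfalso
    obtain ⟨Q₀, hQ₀⟩ := hne
    have hq1 : Q₀ = 1 := by
      have h2 := hQ₀.2
      rw [hn0] at h2
      exact hQ₀.1.1.natDegree_eq_zero.1 h2
    have h3 := hQn.2.1 Q₀ hQ₀
    rw [hq1, KPAux.truncVal_one] at h3
    exact not_top_lt h3
  have hwtop : ∀ Q ∈ Psi wbar n, w.v Q ≠ ⊤ := by
    intro Q hQ
    obtain ⟨Q', _, hlt⟩ := hnomax Q hQ
    exact ne_top_of_lt hlt
  have hS : ∀ Q, Q ∈ Psi wbar n → Nonempty (KPAux.KeySetup w wbar n Q) :=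
    fun Q hQ => KPAux.keySetup_exists hbar hQ hn1 (hwtop Q hQ)
  have TOT : ∀ Q ∈ Psi wbar n, ∀ Q' ∈ Psi wbar n,
      (∀ f : Polynomial K, truncVal w Q f ≤ truncVal w Q' f) ∨
      (∀ f : Polynomial K, truncVal w Q' f ≤ truncVal w Q f) := by
    intro Q hQ Q' hQ'
    obtain ⟨S⟩ := hS Q hQ
    obtain ⟨S'⟩ := hS Q' hQ'
    rcases le_total S.d S'.d with h | h
    · exact Or.inl (S.mono S' h)
    · exact Or.inr (S'.mono S h)
  have DSTRICT : ∀ {Qa Qb : Polynomial K} (S : KPAux.KeySetup w wbar n Qa)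
      (S' : KPAux.KeySetup w wbar n Qb), w.v Qa < w.v Qb → S.d < S'.d := by
    intro Qa Qb S S' hlt
    by_contra hle
    rw [not_lt] at hle
    exact absurd (S'.ord S hle) (not_le.2 hlt)
  have hstab_of_small : ∀ g : Polynomial K, g.degree < Qn.degree →
      ∃ Q ∈ Psi wbar n, truncVal w Q g = w.v g := by
    intro g hg
    have hnot : g ∉ LimitSet w wbar n := fun hmem => absurd (hQn.2.2 g hmem) (not_le.2 hg)
    simp only [LimitSet, Set.mem_setOf_eq, not_forall, not_lt, exists_prop] at hnot
    obtain ⟨Q, hQm, hle⟩ := hnot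
    exact ⟨Q, hQm, le_antisymm (KPAux.truncVal_le w hQm.1.1 (by rw [hQm.2]; exact hn1) g) hle⟩
  refine ⟨TOT, ?_, ?_, ?_, ?_⟩
  · -- no maximal element
    intro Q hQ
    obtain ⟨Q', hQ', hlt⟩ := hnomax Q hQ
    obtain ⟨S⟩ := hS Q hQ
    obtain ⟨S'⟩ := hS Q' hQ'
    have hdd := DSTRICT S S' hlt
    have hne2 : Q' ≠ Q := by
      intro h
      rw [h] at hlt
      exact lt_irrefl _ hlt
    refine ⟨Q', hQ', S.mono S' hdd.le, Q', ?_⟩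
    rw [KPAux.KeySetup.trunc_pair_eq S S' hdd.le hne2,
      KPAux.truncVal_self w S'.monic S'.npos']
    exact hlt
  · -- Qn is not stable
    rintro ⟨Q, hQ, hst⟩
    obtain ⟨Q', hQ', hlt⟩ := hnomax Q hQ
    obtain ⟨S⟩ := hS Q hQ
    obtain ⟨S'⟩ := hS Q' hQ'
    have hdd := DSTRICT S S' hlt
    have heq := hst Q' hQ' (S.mono S' hdd.le)
    have hstrict := KPAux.KeySetup.strict S S' hdd hQn.1.ne_zero
      (hQn.2.1 Q hQ) (hQn.2.1 Q' hQ')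
    rw [heq] at hstrict
    exact lt_irrefl _ hstrict
  · -- Qn has least degree among unstable polynomials
    intro g hg
    by_contra hdeg
    rw [not_le] at hdeg
    obtain ⟨Q, hQm, hEq⟩ := hstab_of_small g hdeg
    refine hg ⟨Q, hQm, fun Q' hQ' hle => le_antisymm ?_ (hle g)⟩
    rw [hEq]
    exact KPAux.truncVal_le w hQ'.1.1 (by rw [hQ'.2]; exact hn1) g
  · -- the digit formula
    intro f r c hf hcdeg
    have hQnM : Qn.Monic := hQn.1
    have hQn1 : 1 ≤ Qn.natDegree := by
      rcases Nat.eq_zero_or_pos Qn.natDegree with h0 | h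
      · exfalso
        have h1 : Qn = 1 := hQnM.natDegree_eq_zero.1 h0
        obtain ⟨Q₀, hQ₀⟩ := hne
        have h2 := hQn.2.1 Q₀ hQ₀
        have hdeg1 : (1 : Polynomial K).degree < Q₀.degree := by
          rw [Polynomial.degree_one, Polynomial.degree_eq_natDegree hQ₀.1.1.ne_zero]
          have hn' : 0 < Q₀.natDegree := by rw [hQ₀.2]; omega
          exact_mod_cast hn'
        rw [h1, KPAux.truncVal_small w hQ₀.1.1 hdeg1] at h2
        exact lt_irrefl _ h2
      · exact h
    subst hf
    have hdig := KPAux.exp_digits hQnM r c hcdeg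
    have hsel : ∀ j : ℕ, ∃ Q, Q ∈ Psi wbar n ∧ truncVal w Q (c j) = w.v (c j) := by
      intro j
      obtain ⟨Q, hQm, hEq⟩ := hstab_of_small (c j) (hcdeg j)
      exact ⟨Q, hQm, hEq⟩
    choose sel hselm hselv using hsel
    have hchain : ∀ m : ℕ, ∃ Q₀, Q₀ ∈ Psi wbar n ∧
        ∀ j, j ≤ m → ∀ h : Polynomial K, truncVal w (sel j) h ≤ truncVal w Q₀ h := by
      intro m
      induction m with
      | zero =>
          refine ⟨sel 0, hselm 0, fun j hj h => ?_⟩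
          cases Nat.le_zero.1 hj
          exact le_rfl
      | succ m ih =>
          obtain ⟨Q₁, hQ₁, hup⟩ := ih
          rcases TOT Q₁ hQ₁ (sel (m + 1)) (hselm (m + 1)) with hc | hc
          · refine ⟨sel (m + 1), hselm (m + 1), fun j hj h => ?_⟩
            rcases Nat.lt_or_ge j (m + 1) with hj2 | hj2
            · exact le_trans (hup j (by omega) h) (hc h)
            · have : j = m + 1 := by omega
              rw [this]
          · refine ⟨Q₁, hQ₁, fun j hj h => ?_⟩
            rcases Nat.lt_or_ge j (m + 1) with hj2 | hj2
            · exact hup j (by omega) h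
            · have : j = m + 1 := by omega
              rw [this]
              exact hc h
    obtain ⟨Q₀, hQ₀m, hQ₀up⟩ := hchain r
    refine ⟨Q₀, hQ₀m, ?_⟩
    intro Q hQm hle
    have hcv : ∀ j, j ≤ r → truncVal w Q (c j) = w.v (c j) := by
      intro j hj
      refine le_antisymm (KPAux.truncVal_le w hQm.1.1 (by rw [hQm.2]; exact hn1) _) ?_
      calc w.v (c j) = truncVal w (sel j) (c j) := (hselv j).symm
        _ ≤ truncVal w Q₀ (c j) := hQ₀up j hj _
        _ ≤ truncVal w Q (c j) := hle _
    have hczero : ∀ j, (∑ i ∈ Finset.range (r + 1), c i * Qn ^ i).natDegree < j → j ≤ r →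
        c j = 0 := by
      intro j hNj hjr
      by_contra hc0
      have hd := hdig j
      rw [if_pos hjr] at hd
      have hdiv0 : (∑ i ∈ Finset.range (r + 1), c i * Qn ^ i) /ₘ Qn ^ j ≠ 0 := by
        intro h0
        rw [← hd, h0, Polynomial.zero_modByMonic] at hc0
        exact hc0 rfl
      exact hdiv0 (KPAux.divByMonic_pow_eq_zero hQnM hQn1 hNj)
    refine KPAux.truncVal_eq_inf' w Qn _ _ ?_ ?_ ?_
    · intro j hjN hjr
      rw [hdig j, if_pos hjr, hcv j hjr, w.v_mul, KPAux.v_pow]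
    · intro j hjN hjr
      rw [hdig j, if_neg (by omega), zero_mul, w.v_zero]
    · intro j hjr hjN
      rw [hcv j hjr, hczero j hjN hjr, w.v_zero, top_add]
end
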